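/- arXiv:1310.7435 — 8 statements merged into one kernel-verified Lean document; each statement's English description precedes it below -/
import Mathlib

section
/- For any finite signed measure m on ℝ and any z ∈ ℂ∖ℝ, one has ∫_{λ∈ℝ} m((−∞,λ])/(z−λ)² dλ = −∫_{λ∈ℝ} 1/(z−λ) dm(λ). -/
open MeasureTheory

private lemma sub_ofReal_ne_zero {z : ℂ} (hz : z.im ≠ 0) (l : ℝ) : z - (l : ℂ) ≠ 0 := by
  intro h
  apply hz
  have := congrArg Complex.im h
  simpa using this

private lemma cont_inv_sq {z : ℂ} (hz : z.im ≠ 0) :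
    Continuous fun l : ℝ => ((z - (l : ℂ)) ^ 2)⁻¹ := by
  apply Continuous.inv₀
  · fun_prop
  · exact fun l => pow_ne_zero _ (sub_ofReal_ne_zero hz l)

private lemma integrable_inv_sq {z : ℂ} (hz : z.im ≠ 0) :
    Integrable (fun l : ℝ => ((z - (l : ℂ)) ^ 2)⁻¹) := by
  have hg : Integrable (fun x : ℝ => (z.im ^ 2)⁻¹ * (1 + ((x - z.re) / z.im) ^ 2)⁻¹) :=
    ((integrable_inv_one_add_sq.comp_div hz).comp_sub_right z.re).const_mul _
  refine Integrable.mono' hg ((cont_inv_sq hz).aestronglyMeasurable) ?_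
  filter_upwards with l
  have h1 : ‖((z - (l : ℂ)) ^ 2)⁻¹‖ = ((z.re - l) ^ 2 + z.im ^ 2)⁻¹ := by
    rw [norm_inv, norm_pow, Complex.sq_norm]
    congr 1
    simp [Complex.normSq_apply]
    ring
  rw [h1]
  have : (z.im ^ 2)⁻¹ * (1 + ((l - z.re) / z.im) ^ 2)⁻¹ = ((z.re - l) ^ 2 + z.im ^ 2)⁻¹ := by
    rw [← mul_inv]
    congr 1
    field_simp
    ring
  rw [this]

private lemma integral_Ioi_inv_sq {z : ℂ} (hz : z.im ≠ 0) (t : ℝ) :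
    (∫ l in Set.Ioi t, ((z - (l : ℂ)) ^ 2)⁻¹) = -(z - (t : ℂ))⁻¹ := by
  have hderiv : ∀ x ∈ Set.Ioi t, HasDerivAt (fun l : ℝ => (z - (l : ℂ))⁻¹)
      (((z - (x : ℂ)) ^ 2)⁻¹) x := by
    intro x _
    have h1 : HasDerivAt (fun w : ℂ => z - w) (-1) (x : ℂ) :=
      (hasDerivAt_id ((x : ℝ) : ℂ)).const_sub z
    have h2 := (h1.inv (sub_ofReal_ne_zero hz x)).comp_ofReal
    convert h2 using 1
    · rfl
    · rw [neg_neg, one_div]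
  have hcont : ContinuousWithinAt (fun l : ℝ => (z - (l : ℂ))⁻¹) (Set.Ici t) t := by
    refine Continuous.continuousWithinAt ?_
    exact Continuous.inv₀ (by fun_prop) (sub_ofReal_ne_zero hz)
  have htend : Filter.Tendsto (fun l : ℝ => (z - (l : ℂ))⁻¹) Filter.atTop (nhds 0) := by
    rw [tendsto_zero_iff_norm_tendsto_zero]
    simp only [norm_inv]
    apply Filter.Tendsto.inv_tendsto_atTop
    apply Filter.tendsto_atTop_mono (f := fun l : ℝ => l - ‖z‖)
    · intro l
      calc l - ‖z‖ ≤ ‖(l : ℂ)‖ - ‖z‖ := by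
            simp [Complex.norm_real]; exact le_abs_self l
        _ ≤ ‖(l : ℂ) - z‖ := norm_sub_norm_le _ _
        _ = ‖z - (l : ℂ)‖ := norm_sub_rev _ _
    · exact Filter.tendsto_atTop_add_const_right _ _ Filter.tendsto_id
  have := integral_Ioi_of_hasDerivAt_of_tendsto hcont hderiv
    ((integrable_inv_sq hz).integrableOn) htend
  rw [this, zero_sub]

/-- Key lemma for a single finite measure. -/
private lemma key {z : ℂ} (hz : z.im ≠ 0) (μ : Measure ℝ) [IsFiniteMeasure μ] :
    (∫ l : ℝ, ((μ (Set.Iic l)).toReal : ℂ) * ((z - (l : ℂ)) ^ 2)⁻¹)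
      = - ∫ t : ℝ, (z - (t : ℂ))⁻¹ ∂μ := by
  set F : ℝ × ℝ → ℂ := fun p =>
    Set.indicator {q : ℝ × ℝ | q.2 ≤ q.1} (fun q => ((z - (q.1 : ℂ)) ^ 2)⁻¹) p with hF
  have hs : MeasurableSet {q : ℝ × ℝ | q.2 ≤ q.1} :=
    measurableSet_le measurable_snd measurable_fst
  have hFmeas : AEStronglyMeasurable F (volume.prod μ) :=
    (((cont_inv_sq hz).comp continuous_fst).aestronglyMeasurable).indicator hs
  have hbig : Integrable (fun p : ℝ × ℝ => ((z - (p.1 : ℂ)) ^ 2)⁻¹) (volume.prod μ) := by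
    simpa using (integrable_inv_sq hz).mul_prod (integrable_const (1 : ℂ))
  have hFint : Integrable F (volume.prod μ) := by
    refine Integrable.mono' hbig.norm hFmeas ?_
    filter_upwards with p
    exact norm_indicator_le_norm_self _ _
  have swap := integral_integral_swap (f := fun l t => F (l, t)) hFint
  have h1 : ∀ l : ℝ, (∫ t : ℝ, F (l, t) ∂μ)
      = ((μ (Set.Iic l)).toReal : ℂ) * ((z - (l : ℂ)) ^ 2)⁻¹ := by
    intro l
    have : (fun t : ℝ => F (l, t))
        = Set.indicator (Set.Iic l) (fun _ => ((z - (l : ℂ)) ^ 2)⁻¹) := by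
      ext t
      by_cases h : t ≤ l <;> simp [hF, Set.indicator, h]
    rw [this, integral_indicator_const _ measurableSet_Iic]
    simp [Complex.real_smul, Measure.real]
  have h2 : ∀ t : ℝ, (∫ l : ℝ, F (l, t)) = -(z - (t : ℂ))⁻¹ := by
    intro t
    have : (fun l : ℝ => F (l, t))
        = Set.indicator (Set.Ici t) (fun l : ℝ => ((z - (l : ℂ)) ^ 2)⁻¹) := by
      ext l
      by_cases h : t ≤ l <;> simp [hF, Set.indicator, h]
    rw [this, integral_indicator measurableSet_Ici,
      integral_Ici_eq_integral_Ioi, integral_Ioi_inv_sq hz]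
  calc (∫ l : ℝ, ((μ (Set.Iic l)).toReal : ℂ) * ((z - (l : ℂ)) ^ 2)⁻¹)
      = ∫ l : ℝ, ∫ t : ℝ, F (l, t) ∂μ := by
        exact (integral_congr_ae (Filter.Eventually.of_forall fun l => (h1 l).symm))
    _ = ∫ t : ℝ, (∫ l : ℝ, F (l, t)) ∂μ := by simpa using swap
    _ = ∫ t : ℝ, -(z - (t : ℂ))⁻¹ ∂μ := by
        refine integral_congr_ae ?_
        filter_upwards with t
        rw [h2 t]
    _ = - ∫ t : ℝ, (z - (t : ℂ))⁻¹ ∂μ := integral_neg _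

/-- For a finite signed measure `m` on `ℝ` and non-real `z`,
`∫_ℝ m((−∞,λ])/(z−λ)² dλ = −∫_ℝ 1/(z−λ) dm(λ)`, where the integral against `m` is
understood via the Jordan decomposition `m = m⁺ − m⁻`. -/
theorem integral_cdf_eq_neg_stieltjes
    (m : SignedMeasure ℝ) (z : ℂ) (hz : z.im ≠ 0) :
    (∫ l : ℝ, ((m (Set.Iic l) : ℝ) : ℂ) / (z - (l : ℂ)) ^ 2)
      = - ((∫ l : ℝ, 1 / (z - (l : ℂ)) ∂m.toJordanDecomposition.posPart)
          - ∫ l : ℝ, 1 / (z - (l : ℂ)) ∂m.toJordanDecomposition.negPart) := by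
  set μ := m.toJordanDecomposition.posPart
  set ν := m.toJordanDecomposition.negPart
  have hm : ∀ l : ℝ, (m (Set.Iic l) : ℝ)
      = (μ (Set.Iic l)).toReal - (ν (Set.Iic l)).toReal := by
    intro l
    conv_lhs => rw [← m.toSignedMeasure_toJordanDecomposition]
    rw [JordanDecomposition.toSignedMeasure]
    simp [VectorMeasure.sub_apply, Measure.real,
      Measure.toSignedMeasure_apply_measurable measurableSet_Iic]
    rfl
  have hμ : Integrable (fun l : ℝ => ((μ (Set.Iic l)).toReal : ℂ) * ((z - (l : ℂ)) ^ 2)⁻¹) := by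
    refine Integrable.mono' ((integrable_inv_sq hz).norm.const_mul (μ Set.univ).toReal)
      ?_ ?_
    · apply AEStronglyMeasurable.mul _ (cont_inv_sq hz).aestronglyMeasurable
      apply Measurable.aestronglyMeasurable
      apply Measurable.comp Complex.measurable_ofReal
      have hmono : Monotone fun l : ℝ => (μ (Set.Iic l)).toReal := fun a b hab =>
        ENNReal.toReal_mono (measure_ne_top μ _) (measure_mono (Set.Iic_subset_Iic.2 hab))
      exact hmono.measurable
    · filter_upwards with l
      rw [norm_mul]
      refine mul_le_mul_of_nonneg_right ?_ (norm_nonneg _)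
      rw [Complex.norm_real, Real.norm_eq_abs, abs_of_nonneg ENNReal.toReal_nonneg]
      exact ENNReal.toReal_mono (measure_ne_top _ _) (measure_mono (Set.subset_univ _))
  have hν : Integrable (fun l : ℝ => ((ν (Set.Iic l)).toReal : ℂ) * ((z - (l : ℂ)) ^ 2)⁻¹) := by
    refine Integrable.mono' ((integrable_inv_sq hz).norm.const_mul (ν Set.univ).toReal)
      ?_ ?_
    · apply AEStronglyMeasurable.mul _ (cont_inv_sq hz).aestronglyMeasurable
      apply Measurable.aestronglyMeasurable
      apply Measurable.comp Complex.measurable_ofReal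
      have hmono : Monotone fun l : ℝ => (ν (Set.Iic l)).toReal := fun a b hab =>
        ENNReal.toReal_mono (measure_ne_top ν _) (measure_mono (Set.Iic_subset_Iic.2 hab))
      exact hmono.measurable
    · filter_upwards with l
      rw [norm_mul]
      refine mul_le_mul_of_nonneg_right ?_ (norm_nonneg _)
      rw [Complex.norm_real, Real.norm_eq_abs, abs_of_nonneg ENNReal.toReal_nonneg]
      exact ENNReal.toReal_mono (measure_ne_top _ _) (measure_mono (Set.subset_univ _))
  have heq : (fun l : ℝ => ((m (Set.Iic l) : ℝ) : ℂ) / (z - (l : ℂ)) ^ 2)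
      = fun l : ℝ => ((μ (Set.Iic l)).toReal : ℂ) * ((z - (l : ℂ)) ^ 2)⁻¹
        - ((ν (Set.Iic l)).toReal : ℂ) * ((z - (l : ℂ)) ^ 2)⁻¹ := by
    ext l
    rw [hm l, div_eq_mul_inv]
    push_cast
    ring
  rw [heq, integral_sub hμ hν, key hz μ, key hz ν]
  simp only [one_div]
  ring
end

section
/- There exists a universal constant R > 0 with the following property: for every n ≥ 1 and all complex numbers u₁, …, uₙ, setting P := ∏_{i=1}^n (1 + u_i/n), S := (1/n) ∑_{i=1}^n u_i and M := max_i |u_i|, if M/n ≤ R then |P − e^S| ≤ (M²/n) · e^{|S| + M²/n}. -/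
open Complex Finset

lemma exp_sub_one_norm_le (w : ℂ) :
    ‖(Complex.exp w - 1)‖ ≤ ‖w‖ * Real.exp (‖w‖) := by
  have hderiv : ∀ t ∈ Set.Icc (0:ℝ) 1,
      HasDerivWithinAt (fun t : ℝ => Complex.exp ((t : ℂ) * w))
        (Complex.exp ((t : ℂ) * w) * w) (Set.Icc 0 1) t := by
    intro t ht
    have h1 : HasDerivAt (fun t : ℝ => (t : ℂ) * w) w t := by
      simpa using (Complex.ofRealCLM.hasDerivAt (x := t)).mul_const w
    exact (h1.cexp).hasDerivWithinAt
  have hbound : ∀ t ∈ Set.Ico (0:ℝ) 1,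
      ‖Complex.exp ((t : ℂ) * w) * w‖ ≤ Real.exp (‖w‖) * ‖w‖ := by
    intro t ht
    rw [norm_mul, Complex.norm_exp]
    gcongr
    calc ((t:ℂ) * w).re ≤ ‖((t:ℂ)*w)‖ := Complex.re_le_norm _
      _ = |t| * ‖w‖ := by rw [norm_mul, Complex.norm_real, Real.norm_eq_abs]
      _ ≤ 1 * ‖w‖ := by
          gcongr
          rw [_root_.abs_of_nonneg ht.1]; exact ht.2.le
      _ = ‖w‖ := one_mul _
  have := norm_image_sub_le_of_norm_deriv_le_segment' hderiv hbound 1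
    (Set.right_mem_Icc.2 zero_le_one)
  simpa [mul_comm] using this

/-- There is a universal constant `R > 0` such that for all `n ≥ 1` and complex numbers
`u₁, …, uₙ`, with `P = ∏ (1 + uᵢ/n)`, `S = (1/n) ∑ uᵢ` and `M = maxᵢ |uᵢ|`,
if `M/n ≤ R` then `|P − e^S| ≤ (M²/n)·e^{|S| + M²/n}`. -/
theorem large_products_exponential :
    ∃ R : ℝ, 0 < R ∧
      ∀ (n : ℕ), 0 < n → ∀ (u : Fin n → ℂ) (M : ℝ),
        (∀ i, ‖(u i)‖ ≤ M) → (∃ i, ‖(u i)‖ = M) →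
        M / n ≤ R →
        ‖((∏ i, (1 + u i / n)) - Complex.exp ((1 / n : ℂ) * ∑ i, u i))‖
          ≤ M ^ 2 / n * Real.exp (‖((1 / n : ℂ) * ∑ i, u i)‖ + M ^ 2 / n) := by
  refine ⟨1/2, by norm_num, ?_⟩
  intro n hn u M hM ⟨i0, hi0⟩ hR
  have hM0 : 0 ≤ M := hi0 ▸ norm_nonneg _
  have hn0 : (0:ℝ) < n := Nat.cast_pos.2 hn
  set z : Fin n → ℂ := fun i => u i / n with hz
  have hzsmall : ∀ i, ‖(z i)‖ ≤ M / n := by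
    intro i
    rw [hz, norm_div, Complex.norm_natCast]
    gcongr
    exact hM i
  have hzhalf : ∀ i, ‖(z i)‖ ≤ 1/2 := fun i => (hzsmall i).trans hR
  have hne : ∀ i, (1 : ℂ) + z i ≠ 0 := by
    intro i h
    have : ‖(z i)‖ = 1 := by
      have : z i = -1 := by linear_combination h
      simp [this]
    linarith [hzhalf i]
  set S : ℂ := ∑ i, z i with hSdef
  have hS : (1 / n : ℂ) * ∑ i, u i = S := by
    rw [hSdef, Finset.mul_sum]
    exact Finset.sum_congr rfl fun i _ => by rw [hz]; ring
  set L : ℂ := ∑ i, Complex.log (1 + z i) with hL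
  have hexpL : Complex.exp L = ∏ i, (1 + z i) := by
    rw [hL, Complex.exp_sum]
    exact Finset.prod_congr rfl fun i _ => Complex.exp_log (hne i)
  set D : ℂ := L - S with hD
  have hDbound : ‖D‖ ≤ M^2 / n := by
    have hDsum : D = ∑ i, (Complex.log (1 + z i) - z i) := by
      rw [hD, hL, hSdef, Finset.sum_sub_distrib]
    rw [hDsum]
    calc ‖(∑ i, (Complex.log (1 + z i) - z i))‖
        ≤ ∑ i, ‖(Complex.log (1 + z i) - z i)‖ := by
          simpa using norm_sum_le Finset.univ fun i => Complex.log (1 + z i) - z i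
      _ ≤ ∑ _i : Fin n, (M/n)^2 := by
          apply Finset.sum_le_sum
          intro i _
          have h1 : ‖(z i)‖ < 1 := lt_of_le_of_lt (hzhalf i) (by norm_num)
          have h2 := Complex.norm_log_one_add_sub_self_le h1
          have h3 : (1 - ‖(z i)‖)⁻¹ ≤ 2 := by
            rw [inv_le_comm₀ (by linarith [hzhalf i]) (by norm_num)]
            linarith [hzhalf i]
          have h4 : ‖(z i)‖ ^ 2 * (1 - ‖(z i)‖)⁻¹ / 2
              ≤ ‖(z i)‖ ^ 2 := by
            have := mul_le_mul_of_nonneg_left h3 (sq_nonneg (‖(z i)‖))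
            linarith
          have h5 : ‖(z i)‖ ^ 2 ≤ (M/n)^2 := by
            have := norm_nonneg (z i)
            have := hzsmall i
            nlinarith
          calc ‖(Complex.log (1 + z i) - z i)‖
              ≤ ‖(z i)‖ ^ 2 * (1 - ‖(z i)‖)⁻¹ / 2 := h2
            _ ≤ ‖(z i)‖ ^ 2 := h4
            _ ≤ (M/n)^2 := h5
      _ = n * (M/n)^2 := by simp [Finset.sum_const]
      _ = M^2 / n := by field_simp
  have key : (∏ i, (1 + u i / n)) - Complex.exp ((1 / n : ℂ) * ∑ i, u i)
      = Complex.exp S * (Complex.exp D - 1) := by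
    have hprod : (∏ i, (1 + u i / (n:ℂ))) = Complex.exp L := hexpL.symm
    rw [hprod, hS, mul_sub, mul_one, ← Complex.exp_add]
    congr 2
    rw [hD]; ring
  rw [key, norm_mul, hS]
  have h1 : ‖(Complex.exp S)‖ ≤ Real.exp (‖S‖) := by
    rw [Complex.norm_exp]
    exact Real.exp_le_exp.2 (Complex.re_le_norm S)
  have h2 : ‖(Complex.exp D - 1)‖ ≤ M^2/n * Real.exp (M^2/n) := by
    calc ‖(Complex.exp D - 1)‖ ≤ ‖D‖ * Real.exp (‖D‖) :=
          exp_sub_one_norm_le D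
      _ ≤ M^2/n * Real.exp (M^2/n) := by
          gcongr
  calc ‖(Complex.exp S)‖ * ‖(Complex.exp D - 1)‖
      ≤ Real.exp (‖S‖) * (M^2/n * Real.exp (M^2/n)) :=
        mul_le_mul h1 h2 (norm_nonneg _) (Real.exp_nonneg _)
    _ = M^2/n * Real.exp (‖S‖ + M^2/n) := by
        rw [Real.exp_add]; ring
end

section
/- Let A = [a_{ij}] be an n×n complex Hermitian matrix with n ≥ 2, let z ∈ ℂ∖ℝ, let G := (zI − A)^{−1}, and let P be an n×n diagonal complex matrix. For 1 ≤ k ≤ n, let A^{(k)} and P^{(k)} be the (n−1)×(n−1) matrices obtained from A and P by deleting the k-th row and the k-th column, let G^{(k)} := (zI − A^{(k)})^{−1}, and let 𝐚_k ∈ ℂ^{n−1} be the k-th column of A with its diagonal entry a_{kk} removed. Then Tr(P G) − Tr(P^{(k)} G^{(k)}) = (P_{kk} + 𝐚_k* G^{(k)} P^{(k)} G^{(k)} 𝐚_k) / (z − a_{kk} − 𝐚_k* G^{(k)} 𝐚_k), and in particular the denominator z − a_{kk} − 𝐚_k* G^{(k)} 𝐚_k is nonzero. -/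
open Matrix

lemma herm_resolvent_isUnit {m : Type*} [Fintype m] [DecidableEq m]
    {A : Matrix m m ℂ} (hA : A.IsHermitian) {z : ℂ} (hz : z.im ≠ 0) :
    IsUnit (z • (1 : Matrix m m ℂ) - A) := by
  have hmem : z ∉ spectrum ℂ A := by
    rw [hA.spectral_theorem, Unitary.conjStarAlgAut_apply, Unitary.spectrum_star_right_conjugate, spectrum_diagonal]
    rintro ⟨i, hi⟩
    apply hz
    rw [← hi]
    simp
  have := spectrum.notMem_iff.mp hmem
  rwa [Algebra.algebraMap_eq_smul_one] at this

lemma row_mul_mul_col {m : Type*} [Fintype m] (u v : m → ℂ) (M : Matrix m m ℂ) :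
    (Matrix.of (fun (_ : PUnit) j => u j) * M * Matrix.of (fun i (_ : PUnit) => v i))
      = (u ⬝ᵥ M.mulVec v) • (1 : Matrix PUnit PUnit ℂ) := by
  ext i j
  simp only [mul_apply, Matrix.of_apply, Matrix.smul_apply, one_apply_eq, smul_eq_mul, mul_one,
    dotProduct, mulVec, Finset.sum_mul, Finset.mul_sum]
  rw [Finset.sum_comm]
  apply Finset.sum_congr rfl
  intro x _
  apply Finset.sum_congr rfl
  intro y _
  ring

lemma trace_submatrix_equiv' {l m R : Type*} [Fintype l] [Fintype m] [AddCommMonoid R]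
    (A : Matrix m m R) (e : l ≃ m) : (A.submatrix e e).trace = A.trace := by
  simp only [Matrix.trace, Matrix.diag, submatrix_apply]
  exact Equiv.sum_comp e (fun i => A i i)

lemma trace_fromBlocks' {l m R : Type*} [Fintype l] [Fintype m] [AddCommMonoid R]
    (A₁₁ : Matrix l l R) (A₁₂ : Matrix l m R) (A₂₁ : Matrix m l R) (A₂₂ : Matrix m m R) :
    (fromBlocks A₁₁ A₁₂ A₂₁ A₂₂).trace = A₁₁.trace + A₂₂.trace := by
  simp [Matrix.trace, Matrix.diag, Fintype.sum_sum_type, fromBlocks]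

/-- Schur complement identity for traces of resolvents: for an `(n+1)×(n+1)` Hermitian matrix
`A`, non-real `z`, `G = (z−A)⁻¹`, a diagonal matrix `P`, and an index `k`, with `A⁽ᵏ⁾`, `P⁽ᵏ⁾`
obtained by deleting the `k`-th row and column, `G⁽ᵏ⁾ = (z−A⁽ᵏ⁾)⁻¹` and `𝐚ₖ` the `k`-th
column of `A` with its `k`-th entry removed, the denominator `z − a_{kk} − 𝐚ₖ* G⁽ᵏ⁾ 𝐚ₖ` is
nonzero and
`Tr(P G) − Tr(P⁽ᵏ⁾ G⁽ᵏ⁾) = (P_{kk} + 𝐚ₖ* G⁽ᵏ⁾ P⁽ᵏ⁾ G⁽ᵏ⁾ 𝐚ₖ)/(z − a_{kk} − 𝐚ₖ* G⁽ᵏ⁾ 𝐚ₖ)`. -/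
theorem trace_resolvent_schur_complement
    (n : ℕ) (hn : 1 ≤ n)
    (A : Matrix (Fin (n + 1)) (Fin (n + 1)) ℂ) (hA : A.IsHermitian)
    (z : ℂ) (hz : z.im ≠ 0)
    (P : Matrix (Fin (n + 1)) (Fin (n + 1)) ℂ) (hP : P.IsDiag)
    (k : Fin (n + 1)) :
    let G : Matrix (Fin (n + 1)) (Fin (n + 1)) ℂ :=
      (z • (1 : Matrix (Fin (n + 1)) (Fin (n + 1)) ℂ) - A)⁻¹
    let Ak : Matrix (Fin n) (Fin n) ℂ := A.submatrix k.succAbove k.succAbove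
    let Pk : Matrix (Fin n) (Fin n) ℂ := P.submatrix k.succAbove k.succAbove
    let Gk : Matrix (Fin n) (Fin n) ℂ := (z • (1 : Matrix (Fin n) (Fin n) ℂ) - Ak)⁻¹
    let a : Fin n → ℂ := fun i => A (k.succAbove i) k
    let d : ℂ := z - A k k - star a ⬝ᵥ Gk.mulVec a
    d ≠ 0 ∧
      Matrix.trace (P * G) - Matrix.trace (Pk * Gk)
        = (P k k + star a ⬝ᵥ (Gk * Pk * Gk).mulVec a) / d := by
  intro G Ak Pk Gk a d
  classical
  have hAk : Ak.IsHermitian := hA.submatrix _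
  have hAk' : Ak = A.submatrix k.succAbove k.succAbove := rfl
  have hPk' : Pk = P.submatrix k.succAbove k.succAbove := rfl
  have ha' : a = fun i => A (k.succAbove i) k := rfl
  set s : ℂ := star a ⬝ᵥ Gk.mulVec a with hs
  have hd' : d = z - A k k - s := rfl
  set M : Matrix (Fin (n+1)) (Fin (n+1)) ℂ := z • 1 - A with hM
  set Mk : Matrix (Fin n) (Fin n) ℂ := z • 1 - Ak with hMkdef
  have hMu : IsUnit M := herm_resolvent_isUnit hA hz
  have hMku : IsUnit Mk := herm_resolvent_isUnit hAk hz
  have hMkdet : IsUnit Mk.det := (isUnit_iff_isUnit_det _).mp hMku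
  have hMdet : IsUnit M.det := (isUnit_iff_isUnit_det _).mp hMu
  have hGkdef : Gk = Mk⁻¹ := rfl
  have hGdef : G = M⁻¹ := rfl
  have hGk1 : Mk * Gk = 1 := by rw [hGkdef]; exact mul_nonsing_inv _ hMkdet
  -- the reindexing equivalence
  let e : (Fin n ⊕ PUnit.{1}) ≃ Fin (n+1) :=
    ((finSuccEquiv' k).trans (Equiv.optionEquivSumPUnit (Fin n))).symm
  have he1 : ∀ i, e (Sum.inl i) = k.succAbove i := fun i => by
    simp [e, Equiv.symm_trans_apply, finSuccEquiv'_symm_some]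
  have he2 : ∀ u, e (Sum.inr u) = k := fun u => by
    simp [e, Equiv.symm_trans_apply, finSuccEquiv'_symm_none]
  -- blocks
  set B : Matrix (Fin n) PUnit.{1} ℂ := Matrix.of (fun i (_ : PUnit.{1}) => -(a i)) with hB
  set C : Matrix PUnit.{1} (Fin n) ℂ := Matrix.of (fun (_ : PUnit.{1}) j => -(star a j)) with hC
  have hCMB : ∀ (Q : Matrix (Fin n) (Fin n) ℂ),
      C * Q * B = (star a ⬝ᵥ Q.mulVec a) • (1 : Matrix PUnit.{1} PUnit.{1} ℂ) := by
    intro Q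
    rw [hB, hC]
    rw [show (Matrix.of (fun (_ : PUnit.{1}) j => -(star a j))) =
      Matrix.of (fun (_ : PUnit.{1}) j => (-(star a)) j) from rfl]
    rw [show (Matrix.of (fun i (_ : PUnit.{1}) => -(a i))) =
      Matrix.of (fun i (_ : PUnit.{1}) => (-a) i) from rfl]
    rw [row_mul_mul_col]
    simp [Matrix.mulVec_neg]
  have hN : M.submatrix e e = fromBlocks Mk B C ((z - A k k) • (1 : Matrix PUnit.{1} PUnit.{1} ℂ)) := by
    ext i j
    rcases i with i | u <;> rcases j with j | v
    · simp [hM, hMkdef, hAk', submatrix_apply, he1, fromBlocks, Matrix.sub_apply, Matrix.smul_apply,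
        one_apply, Fin.succAbove_right_inj]
    · simp [hM, ha', submatrix_apply, he1, he2, fromBlocks, hB, Matrix.sub_apply, Matrix.smul_apply,
        one_apply, Fin.succAbove_ne k i]
    · simp only [hM, submatrix_apply, he1, he2, fromBlocks, Sum.elim_inr, Sum.elim_inl,
        Matrix.sub_apply, Matrix.smul_apply, one_apply, hC, Matrix.of_apply]
      rw [if_neg (Ne.symm (Fin.succAbove_ne k j)), smul_zero, zero_sub, ha']
      simp only [Pi.star_apply]
      exact congrArg Neg.neg (hA.apply k (k.succAbove j)).symm
    · simp [hM, submatrix_apply, he2, fromBlocks, Matrix.sub_apply, Matrix.smul_apply, one_apply]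
  haveI : Invertible Mk := Mk.invertibleOfIsUnitDet hMkdet
  have hinv : ⅟Mk = Gk := by rw [invOf_eq_nonsing_inv, hGkdef]
  have hSchur : (z - A k k) • (1 : Matrix PUnit.{1} PUnit.{1} ℂ) - C * ⅟Mk * B
      = d • (1 : Matrix PUnit.{1} PUnit.{1} ℂ) := by
    rw [hinv, hCMB Gk, ← hs, ← sub_smul, ← hd']
  have hdetN : (M.submatrix e e).det = Mk.det * d := by
    rw [hN, det_fromBlocks₁₁, hSchur]
    have h1 : (d • (1 : Matrix PUnit.{1} PUnit.{1} ℂ)).det = d := by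
      rw [Matrix.det_unique, Matrix.smul_apply, Matrix.one_apply_eq, smul_eq_mul, mul_one]
    rw [h1]
  have hd0 : d ≠ 0 := by
    intro h
    have h2 : IsUnit (Mk.det * d) := by
      rwa [← hdetN, det_submatrix_equiv_self] 
    rw [h, mul_zero] at h2
    simpa using h2
  refine ⟨hd0, ?_⟩
  have hCGkB : C * Gk * B = s • (1 : Matrix PUnit.{1} PUnit.{1} ℂ) := by rw [hCMB Gk, hs]
  set X : Matrix (Fin n ⊕ PUnit.{1}) (Fin n ⊕ PUnit.{1}) ℂ :=
    fromBlocks (Gk + d⁻¹ • (Gk * B * C * Gk)) (-(d⁻¹ • (Gk * B)))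
      (-(d⁻¹ • (C * Gk))) (d⁻¹ • (1 : Matrix PUnit.{1} PUnit.{1} ℂ)) with hX
  have h11 : Mk * (Gk + d⁻¹ • (Gk * B * C * Gk)) + B * (-(d⁻¹ • (C * Gk))) = 1 := by
    simp only [Matrix.mul_add, Matrix.mul_smul, Matrix.mul_neg, ← Matrix.mul_assoc, hGk1,
      Matrix.one_mul]
    abel
  have h12 : Mk * (-(d⁻¹ • (Gk * B))) + B * (d⁻¹ • (1 : Matrix PUnit.{1} PUnit.{1} ℂ)) = 0 := by
    rw [Matrix.mul_neg, Matrix.mul_smul, ← Matrix.mul_assoc, hGk1, Matrix.one_mul,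
      Matrix.mul_smul, Matrix.mul_one, neg_add_cancel]
  have h21 : C * (Gk + d⁻¹ • (Gk * B * C * Gk)) + ((z - A k k) • (1 : Matrix PUnit.{1} PUnit.{1} ℂ)) * (-(d⁻¹ • (C * Gk))) = 0 := by
    have e1 : C * (Gk * B * C * Gk) = s • (C * Gk) := by
      rw [show C * (Gk * B * C * Gk) = (C * Gk * B) * (C * Gk) by
        simp only [Matrix.mul_assoc], hCGkB, Matrix.smul_mul, Matrix.one_mul]
    simp only [Matrix.mul_add, Matrix.mul_smul, Matrix.mul_neg, e1, Matrix.smul_mul,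
      Matrix.one_mul, smul_smul]
    rw [show d⁻¹ * (z - A k k) = 1 + d⁻¹ * s by field_simp [hd']; try ring]
    module
  have h22 : C * (-(d⁻¹ • (Gk * B))) + ((z - A k k) • (1 : Matrix PUnit.{1} PUnit.{1} ℂ)) * (d⁻¹ • (1 : Matrix PUnit.{1} PUnit.{1} ℂ)) = 1 := by
    simp only [Matrix.mul_neg, Matrix.mul_smul, ← Matrix.mul_assoc, hCGkB, Matrix.smul_mul,
      Matrix.one_mul, Matrix.mul_one, smul_smul]
    rw [show d⁻¹ * (z - A k k) = 1 + d⁻¹ * s by field_simp [hd']; try ring]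
    module
  have hNX : (fromBlocks Mk B C ((z - A k k) • (1 : Matrix PUnit.{1} PUnit.{1} ℂ))) * X = 1 := by
    rw [hX, fromBlocks_multiply, h11, h12, h21, h22, fromBlocks_one]
  have hGsub : G.submatrix ⇑e ⇑e = X := by
    rw [hGdef, ← inv_submatrix_equiv M e e]
    exact inv_eq_right_inv (by rw [hN]; exact hNX)
  have hPsub : P.submatrix ⇑e ⇑e = fromBlocks Pk 0 0 ((P k k) • (1 : Matrix PUnit.{1} PUnit.{1} ℂ)) := by
    ext i j
    rcases i with i | u <;> rcases j with j | v
    · simp [hPk', submatrix_apply, he1, fromBlocks]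
    · simp [submatrix_apply, he1, he2, fromBlocks, hP (Fin.succAbove_ne k i)]
    · simp [submatrix_apply, he1, he2, fromBlocks, hP (Ne.symm (Fin.succAbove_ne k j))]
    · simp [submatrix_apply, he2, fromBlocks, Matrix.smul_apply, one_apply]
  have ht : Matrix.trace (Pk * (Gk * B * C * Gk)) = star a ⬝ᵥ (Gk * Pk * Gk).mulVec a := by
    rw [show Pk * (Gk * B * C * Gk) = (Pk * Gk * B) * (C * Gk) by simp only [Matrix.mul_assoc],
      trace_mul_comm,
      show C * Gk * (Pk * Gk * B) = C * (Gk * Pk * Gk) * B by simp only [Matrix.mul_assoc],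
      hCMB (Gk * Pk * Gk)]
    simp [Matrix.trace_smul, Matrix.trace_one]
  have htr : Matrix.trace (P * G) =
      Matrix.trace (Pk * Gk) + d⁻¹ * (star a ⬝ᵥ (Gk * Pk * Gk).mulVec a) + P k k * d⁻¹ := by
    rw [← trace_submatrix_equiv' (P * G) e, ← submatrix_mul_equiv P G e e e, hPsub, hGsub, hX,
      fromBlocks_multiply, trace_fromBlocks']
    simp only [Matrix.zero_mul, Matrix.mul_zero, add_zero, zero_add, Matrix.mul_add,
      Matrix.mul_smul, Matrix.trace_add, Matrix.trace_smul, ht, Matrix.smul_mul, smul_smul,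
      Matrix.mul_one, Matrix.trace_one]
    simp [smul_eq_mul]
    ring
  rw [htr]
  field_simp
  ring
end

section
/- Let A be an n×n complex Hermitian matrix with n ≥ 2, let z ∈ ℂ∖ℝ, let G := (zI − A)^{−1}, and let P be an n×n diagonal complex matrix. For 1 ≤ k ≤ n, let A^{(k)} and P^{(k)} be the matrices obtained from A and P by deleting the k-th row and column, and let G^{(k)} := (zI − A^{(k)})^{−1}. Then |Tr(P G) − Tr(P^{(k)} G^{(k)})| ≤ 5‖P‖_∞ / |Im z|, where ‖P‖_∞ is the operator norm of P (equal to max_k |P_{kk}|). -/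
open Matrix Finset

private lemma div_le_div_of_nonneg_right' {x y c : ℝ} (h : x ≤ y) (hc : 0 < c) :
    x / c ≤ y / c := by
  gcongr

lemma resolvent_isUnit {m : Type*} [Fintype m] [DecidableEq m]
    (A : Matrix m m ℂ) (hA : A.IsHermitian) (z : ℂ) (hz : z.im ≠ 0) :
    IsUnit (z • (1 : Matrix m m ℂ) - A).det := by
  rw [isUnit_iff_ne_zero]
  intro hdet
  obtain ⟨v, hv, hMv⟩ := (Matrix.exists_mulVec_eq_zero_iff).mpr hdet
  have hAv : A *ᵥ v = z • v := by
    rw [Matrix.sub_mulVec, Matrix.smul_mulVec, Matrix.one_mulVec, sub_eq_zero] at hMv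
    exact hMv.symm
  have hc : star (star v ⬝ᵥ (A *ᵥ v)) = star v ⬝ᵥ (A *ᵥ v) := by
    conv_lhs => rw [Matrix.star_dotProduct]
    rw [star_star, Matrix.star_mulVec, ← Matrix.dotProduct_mulVec, hA.eq]
  have hzn : star v ⬝ᵥ (A *ᵥ v) = z * (star v ⬝ᵥ v) := by
    rw [hAv, dotProduct_smul, smul_eq_mul]
  have hN : star v ⬝ᵥ v = ((∑ i, Complex.normSq (v i) : ℝ) : ℂ) := by
    push_cast
    simp [dotProduct, Complex.normSq_eq_conj_mul_self]
  have hNpos : 0 < ∑ i, Complex.normSq (v i) := by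
    have : ∃ i, v i ≠ 0 := by
      by_contra h
      push_neg at h
      exact hv (funext h)
    obtain ⟨i, hi⟩ := this
    exact Finset.sum_pos' (fun j _ => Complex.normSq_nonneg _)
      ⟨i, Finset.mem_univ i, Complex.normSq_pos.mpr hi⟩
  have him : (star v ⬝ᵥ (A *ᵥ v)).im = 0 := by
    have := congrArg Complex.im hc
    simp only [Complex.star_def, Complex.conj_im] at this
    linarith
  rw [hzn, hN] at him
  simp [Complex.mul_im] at him
  rcases him with h | h
  · exact hz h
  · exact hNpos.ne' h

lemma trace_mul_of_isDiag {m : Type*} [Fintype m] [DecidableEq m]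
    (Q R : Matrix m m ℂ) (hQ : Q.IsDiag) :
    Matrix.trace (Q * R) = ∑ i, Q i i * R i i := by
  unfold Matrix.trace
  apply Finset.sum_congr rfl
  intro i _
  rw [Matrix.diag_apply, Matrix.mul_apply]
  exact Finset.sum_eq_single i (fun j _ hj => by rw [hQ hj.symm, zero_mul]) (by simp)

set_option maxHeartbeats 1000000 in
/-- Trace perturbation bound: for an `(n+1)×(n+1)` Hermitian matrix `A`, non-real `z`,
`G = (z−A)⁻¹`, a diagonal matrix `P`, and an index `k`, with `A⁽ᵏ⁾`, `P⁽ᵏ⁾` obtained by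
deleting the `k`-th row and column and `G⁽ᵏ⁾ = (z−A⁽ᵏ⁾)⁻¹`,
`|Tr(P G) − Tr(P⁽ᵏ⁾ G⁽ᵏ⁾)| ≤ 5 ‖P‖_∞ / |Im z|`, where `‖P‖_∞` is the operator norm of `P`
on the Euclidean space `ℂⁿ⁺¹`. -/
theorem trace_resolvent_minor_bound
    (n : ℕ) (hn : 1 ≤ n)
    (A : Matrix (Fin (n + 1)) (Fin (n + 1)) ℂ) (hA : A.IsHermitian)
    (z : ℂ) (hz : z.im ≠ 0)
    (P : Matrix (Fin (n + 1)) (Fin (n + 1)) ℂ) (hP : P.IsDiag)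
    (k : Fin (n + 1)) :
    let G : Matrix (Fin (n + 1)) (Fin (n + 1)) ℂ :=
      (z • (1 : Matrix (Fin (n + 1)) (Fin (n + 1)) ℂ) - A)⁻¹
    let Ak : Matrix (Fin n) (Fin n) ℂ := A.submatrix k.succAbove k.succAbove
    let Pk : Matrix (Fin n) (Fin n) ℂ := P.submatrix k.succAbove k.succAbove
    let Gk : Matrix (Fin n) (Fin n) ℂ := (z • (1 : Matrix (Fin n) (Fin n) ℂ) - Ak)⁻¹
    ‖Matrix.trace (P * G) - Matrix.trace (Pk * Gk)‖
      ≤ 5 * ‖Matrix.toEuclideanCLM (𝕜 := ℂ) (n := Fin (n + 1)) P‖ / |z.im| := by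
  intro G Ak Pk Gk
  set M : Matrix (Fin (n + 1)) (Fin (n + 1)) ℂ := z • 1 - A with hMdef
  have hMdet : IsUnit M.det := resolvent_isUnit A hA z hz
  have hMG : M * G = 1 := Matrix.mul_nonsing_inv M hMdet
  have hGM : G * M = 1 := Matrix.nonsing_inv_mul M hMdet
  have hAk : Ak.IsHermitian := hA.submatrix _
  have hMkdet : IsUnit (z • (1 : Matrix (Fin n) (Fin n) ℂ) - Ak).det :=
    resolvent_isUnit Ak hAk z hz
  have hMH : Mᴴ = (starRingEnd ℂ z) • 1 - A := by
    rw [hMdef, Matrix.conjTranspose_sub, Matrix.conjTranspose_smul, Matrix.conjTranspose_one, hA.eq]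
    rfl
  have hMHGH : Mᴴ * Gᴴ = 1 := by rw [← Matrix.conjTranspose_mul, hGM, Matrix.conjTranspose_one]
  have hGHMH : Gᴴ * Mᴴ = 1 := by rw [← Matrix.conjTranspose_mul, hMG, Matrix.conjTranspose_one]
  have hMHM : Mᴴ - M = ((starRingEnd ℂ) z - z) • 1 := by
    rw [hMH, hMdef, sub_smul]; abel
  have hGH : G - Gᴴ = ((starRingEnd ℂ) z - z) • (G * Gᴴ) := by
    have h1 : G * (Mᴴ - M) * Gᴴ = G - Gᴴ := by
      have e : G * (Mᴴ - M) * Gᴴ = G * (Mᴴ * Gᴴ) - (G * M) * Gᴴ := by noncomm_ring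
      rw [e, hMHGH, hGM, Matrix.mul_one, Matrix.one_mul]
    rw [← h1, hMHM]
    simp [mul_smul_comm, smul_mul_assoc]
  have hGH' : G - Gᴴ = ((starRingEnd ℂ) z - z) • (Gᴴ * G) := by
    have h1 : Gᴴ * (Mᴴ - M) * G = G - Gᴴ := by
      have e : Gᴴ * (Mᴴ - M) * G = (Gᴴ * Mᴴ) * G - Gᴴ * (M * G) := by noncomm_ring
      rw [e, hGHMH, hMG, Matrix.mul_one, Matrix.one_mul]
    rw [← h1, hMHM]
    simp [mul_smul_comm, smul_mul_assoc]
  -- scalar Ward identities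
  set Sr : ℝ := ∑ j, Complex.normSq (G k j) with hSrdef
  set Sc : ℝ := ∑ j, Complex.normSq (G j k) with hScdef
  have hWr : (G k k).im = -z.im * Sr := by
    have e := congrFun (congrFun hGH k) k
    simp only [Matrix.sub_apply, Matrix.smul_apply, Matrix.conjTranspose_apply,
      Matrix.mul_apply, smul_eq_mul] at e
    have e2 : ∑ j, G k j * star (G k j) = ((Sr : ℝ) : ℂ) := by
      rw [hSrdef]
      push_cast
      exact Finset.sum_congr rfl fun j _ => (Complex.mul_conj _)
    rw [e2] at e
    have := congrArg Complex.im e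
    simp [Complex.sub_im, Complex.mul_im, Complex.conj_im, Complex.conj_re] at this
    linarith
  have hWc : (G k k).im = -z.im * Sc := by
    have e := congrFun (congrFun hGH' k) k
    simp only [Matrix.sub_apply, Matrix.smul_apply, Matrix.conjTranspose_apply,
      Matrix.mul_apply, smul_eq_mul] at e
    have e2 : ∑ j, star (G j k) * G j k = ((Sc : ℝ) : ℂ) := by
      rw [hScdef]
      push_cast
      exact Finset.sum_congr rfl fun j _ => (Complex.normSq_eq_conj_mul_self).symm
    rw [e2] at e
    have := congrArg Complex.im e
    simp [Complex.sub_im, Complex.mul_im, Complex.conj_im, Complex.conj_re] at this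
    linarith

  -- G k k is nonzero and small
  have hSr_nonneg : 0 ≤ Sr := Finset.sum_nonneg fun j _ => Complex.normSq_nonneg _
  have hzim : (0:ℝ) < |z.im| := abs_pos.mpr hz
  have hGkk : G k k ≠ 0 := by
    intro h0
    have him0 : (G k k).im = 0 := by rw [h0]; rfl
    have hSr0 : Sr = 0 := by
      rw [him0] at hWr
      rcases mul_eq_zero.mp hWr.symm with h | h
      · exact absurd (neg_eq_zero.mp h) hz
      · exact h
    have hrow0 : ∀ j, G k j = 0 := by
      intro j
      have := (Finset.sum_eq_zero_iff_of_nonneg (fun j _ => Complex.normSq_nonneg (G k j))).mp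
        hSr0 j (Finset.mem_univ j)
      exact Complex.normSq_eq_zero.mp this
    have : (G * M) k k = 0 := by
      rw [Matrix.mul_apply]
      exact Finset.sum_eq_zero fun j _ => by rw [hrow0 j, zero_mul]
    rw [hGM] at this
    simp [Matrix.one_apply] at this
  set a : ℝ := ‖G k k‖ with hadef
  have ha_pos : 0 < a := norm_pos_iff.mpr hGkk
  have hnormSq_le : Complex.normSq (G k k) ≤ Sr :=
    Finset.single_le_sum (fun j _ => Complex.normSq_nonneg (G k j)) (Finset.mem_univ k)
  have hSr_eq : |z.im| * Sr = |(G k k).im| := by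
    rw [hWr, abs_mul, abs_neg]
    rw [abs_of_nonneg hSr_nonneg]
  have hSr_le : Sr * |z.im| ≤ a := by
    have h1 : |(G k k).im| ≤ a := Complex.abs_im_le_norm _
    calc Sr * |z.im| = |z.im| * Sr := by ring
    _ = |(G k k).im| := hSr_eq
    _ ≤ a := h1
  have ha_le : a * |z.im| ≤ 1 := by
    have hsq : a ^ 2 = Complex.normSq (G k k) := Complex.sq_norm _
    nlinarith [hnormSq_le, hSr_le, ha_pos, hzim]
  have hScSr : Sc = Sr := by
    have := hWr.symm.trans hWc
    have h2 : z.im * Sr = z.im * Sc := by linarith [this]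
    exact (mul_left_cancel₀ hz h2).symm
  -- Schur complement identity
  set σ : Fin n → Fin (n + 1) := k.succAbove with hσdef
  have hσne : ∀ i, σ i ≠ k := fun i => Fin.succAbove_ne k i
  have hσinj : Function.Injective σ := Fin.succAbove_right_injective
  have hMsub : ∀ (i l : Fin n), (z • (1 : Matrix (Fin n) (Fin n) ℂ) - Ak) i l = M (σ i) (σ l) := by
    intro i l
    simp only [Matrix.sub_apply, Matrix.smul_apply, Matrix.one_apply, hMdef, smul_eq_mul,
      Matrix.submatrix_apply, Ak, hσinj.eq_iff]
    rfl
  have hrow : ∀ (i : Fin n) (c : Fin (n + 1)),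
      ∑ l : Fin n, M (σ i) (σ l) * G (σ l) c
        = (1 : Matrix (Fin (n + 1)) (Fin (n + 1)) ℂ) (σ i) c - M (σ i) k * G k c := by
    intro i c
    have h1 : ∑ m, M (σ i) m * G m c
        = M (σ i) k * G k c + ∑ l : Fin n, M (σ i) (σ l) * G (σ l) c :=
      Fin.sum_univ_succAbove (fun m => M (σ i) m * G m c) k
    have h2 : ∑ m, M (σ i) m * G m c = (1 : Matrix (Fin (n + 1)) (Fin (n + 1)) ℂ) (σ i) c := by
      rw [← Matrix.mul_apply, hMG]
    rw [h2] at h1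
    linear_combination -h1
  have hGk : Gk = Matrix.of fun i j => G (σ i) (σ j) - G (σ i) k * G k (σ j) / G k k := by
    apply Matrix.inv_eq_right_inv
    ext i j
    rw [Matrix.mul_apply]
    simp only [Matrix.of_apply]
    have expand : ∀ l : Fin n,
        (z • (1 : Matrix (Fin n) (Fin n) ℂ) - Ak) i l
            * (G (σ l) (σ j) - G (σ l) k * G k (σ j) / G k k)
          = M (σ i) (σ l) * G (σ l) (σ j)
            - (M (σ i) (σ l) * G (σ l) k) * (G k (σ j) / G k k) := by
      intro l
      rw [hMsub]
      ring
    rw [Finset.sum_congr rfl fun l _ => expand l, Finset.sum_sub_distrib, ← Finset.sum_mul,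
      hrow, hrow]
    have h0 : (1 : Matrix (Fin (n + 1)) (Fin (n + 1)) ℂ) (σ i) k = 0 :=
      Matrix.one_apply_ne (hσne i)
    have h1' : (1 : Matrix (Fin (n + 1)) (Fin (n + 1)) ℂ) (σ i) (σ j)
        = (1 : Matrix (Fin n) (Fin n) ℂ) i j := by
      simp [Matrix.one_apply, hσinj.eq_iff]
    rw [h0, h1']
    field_simp
    ring

  -- traces via diagonals
  have hPk : Pk.IsDiag := by
    intro i j hij
    exact hP (hσinj.ne hij)
  have hT1 : Matrix.trace (P * G)
      = P k k * G k k + ∑ i : Fin n, P (σ i) (σ i) * G (σ i) (σ i) := by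
    rw [trace_mul_of_isDiag P G hP]
    exact Fin.sum_univ_succAbove (fun i => P i i * G i i) k
  have hT2 : Matrix.trace (Pk * Gk)
      = ∑ i : Fin n, P (σ i) (σ i) * (G (σ i) (σ i) - G (σ i) k * G k (σ i) / G k k) := by
    rw [trace_mul_of_isDiag Pk Gk hPk, hGk]
    apply Finset.sum_congr rfl
    intro i _
    rfl
  have hD : Matrix.trace (P * G) - Matrix.trace (Pk * Gk)
      = P k k * G k k + ∑ i : Fin n, P (σ i) (σ i) * (G (σ i) k * G k (σ i) / G k k) := by
    rw [hT1, hT2, add_sub_assoc, ← Finset.sum_sub_distrib]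
    congr 1
    apply Finset.sum_congr rfl
    intro i _
    ring
  -- diagonal entries bounded by the operator norm
  set mP : ℝ := ‖Matrix.toEuclideanCLM (𝕜 := ℂ) (n := Fin (n + 1)) P‖ with hmPdef
  have hmP_nonneg : 0 ≤ mP := norm_nonneg _
  have hPdiag : ∀ i, ‖P i i‖ ≤ mP := by
    intro i
    have h1 : Matrix.toEuclideanCLM (𝕜 := ℂ) P (EuclideanSpace.single i (1 : ℂ))
        = EuclideanSpace.single i (P i i) := by
      have e1 := (Matrix.toEuclideanCLM_toLp (𝕜 := ℂ) P (Pi.single i (1 : ℂ))).trans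
        (congrArg (WithLp.toLp 2) (Matrix.toLin'_apply P (Pi.single i (1 : ℂ))).symm)
      have e2 : Matrix.toLin' P (Pi.single i (1 : ℂ)) = Pi.single i (P i i) := by
        rw [Matrix.toLin'_apply, Matrix.mulVec_single]
        funext j
        by_cases hji : j = i
        · subst hji; simp
        · simp [Pi.single_apply, hji, hP hji]
      rw [e2] at e1
      exact e1
    have h2 := (Matrix.toEuclideanCLM (𝕜 := ℂ) P).le_opNorm (EuclideanSpace.single i (1 : ℂ))
    rw [h1, EuclideanSpace.norm_single, EuclideanSpace.norm_single] at h2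
    simpa using h2
  -- Cauchy-Schwarz
  have hCS : ∑ i : Fin n, ‖G (σ i) k‖ * ‖G k (σ i)‖ ≤ Sr := by
    have hsq := Finset.sum_mul_sq_le_sq_mul_sq Finset.univ
      (fun i => ‖G i k‖) (fun i => ‖G k i‖)
    have h1 : ∑ i, ‖G i k‖ ^ 2 = Sc := by
      rw [hScdef]; exact Finset.sum_congr rfl fun i _ => Complex.sq_norm _
    have h2 : ∑ i, ‖G k i‖ ^ 2 = Sr := by
      rw [hSrdef]; exact Finset.sum_congr rfl fun i _ => Complex.sq_norm _
    rw [h1, h2, hScSr] at hsq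
    have hnn : 0 ≤ ∑ i, ‖G i k‖ * ‖G k i‖ :=
      Finset.sum_nonneg fun i _ =>
        mul_nonneg (norm_nonneg _) (norm_nonneg _)
    have hfull : ∑ i : Fin (n + 1), ‖G i k‖ * ‖G k i‖ ≤ Sr := by
      nlinarith [hsq, hnn, hSr_nonneg]
    have hsplit : ∑ i : Fin (n + 1), ‖G i k‖ * ‖G k i‖
        = ‖G k k‖ * ‖G k k‖
          + ∑ i : Fin n, ‖G (σ i) k‖ * ‖G k (σ i)‖ :=
      Fin.sum_univ_succAbove (fun i => ‖G i k‖ * ‖G k i‖) k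
    nlinarith [hfull, hsplit, mul_self_nonneg (‖G k k‖)]
  -- final estimate
  rw [hD]
  have hb1 : ‖P k k * G k k‖ ≤ mP * a := by
    rw [norm_mul]
    exact mul_le_mul (hPdiag k) le_rfl (norm_nonneg _) hmP_nonneg
  have hb2 : ‖∑ i : Fin n, P (σ i) (σ i) * (G (σ i) k * G k (σ i) / G k k)‖
      ≤ mP * Sr / a := by
    calc ‖∑ i : Fin n, P (σ i) (σ i) * (G (σ i) k * G k (σ i) / G k k)‖
        ≤ ∑ i : Fin n, ‖P (σ i) (σ i) * (G (σ i) k * G k (σ i) / G k k)‖ :=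
          norm_sum_le _ _
      _ ≤ ∑ i : Fin n, mP * (‖G (σ i) k‖ * ‖G k (σ i)‖) / a := by
          apply Finset.sum_le_sum
          intro i _
          rw [norm_mul, norm_div, norm_mul, ← mul_div_assoc]
          exact div_le_div_of_nonneg_right' (mul_le_mul_of_nonneg_right (hPdiag _)
            (mul_nonneg (norm_nonneg _) (norm_nonneg _))) ha_pos
      _ = mP * (∑ i : Fin n, ‖G (σ i) k‖ * ‖G k (σ i)‖) / a := by
          rw [← Finset.sum_div, ← Finset.mul_sum]
      _ ≤ mP * Sr / a :=
          div_le_div_of_nonneg_right' (mul_le_mul_of_nonneg_left hCS hmP_nonneg) ha_pos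
  have e1 : mP * a ≤ mP / |z.im| := by
    rw [le_div_iff₀ hzim, mul_assoc]
    calc mP * (a * |z.im|) ≤ mP * 1 := mul_le_mul_of_nonneg_left ha_le hmP_nonneg
      _ = mP := mul_one mP
  have e2 : mP * Sr / a ≤ mP / |z.im| := by
    rw [div_le_div_iff₀ ha_pos hzim, mul_assoc]
    calc mP * (Sr * |z.im|) ≤ mP * a := mul_le_mul_of_nonneg_left hSr_le hmP_nonneg
      _ = mP * a := rfl
  have e3 : 5 * mP / |z.im| = 5 * (mP / |z.im|) := by ring
  have e4 : 0 ≤ mP / |z.im| := div_nonneg hmP_nonneg (le_of_lt hzim)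
  calc ‖P k k * G k k
        + ∑ i : Fin n, P (σ i) (σ i) * (G (σ i) k * G k (σ i) / G k k)‖
      ≤ ‖P k k * G k k‖
        + ‖∑ i : Fin n, P (σ i) (σ i) * (G (σ i) k * G k (σ i) / G k k)‖ :=
        norm_add_le _ _
    _ ≤ mP * a + mP * Sr / a := add_le_add hb1 hb2
    _ ≤ 5 * mP / |z.im| := by rw [e3]; linarith
end

section
/- With the above notation, for any s ∈ [0,1] and any z ∈ ℂ∖ℝ, one has ∫_{λ∈ℝ} C^n_{s,λ}/(z−λ)² dλ = −X^n(s,z). -/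
open Matrix
open MeasureTheory Set Filter

lemma sub_ofReal_ne (z : ℂ) (hz : z.im ≠ 0) (t : ℝ) : z - (t:ℂ) ≠ 0 := by
  intro h
  apply hz
  simpa using congrArg Complex.im h

lemma integrable_aux (z : ℂ) (hz : z.im ≠ 0) :
    Integrable (fun t : ℝ => ((z - (t:ℂ))^2)⁻¹) := by
  have hb : z.im ≠ 0 := hz
  have h0 : Integrable (fun x : ℝ => (1 + x^2)⁻¹) := integrable_inv_one_add_sq
  have h1 : Integrable (fun x : ℝ => (1 + (z.im⁻¹ * x)^2)⁻¹) :=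
    h0.comp_mul_left' (inv_ne_zero hb)
  have h2 : Integrable (fun t : ℝ => (1 + (z.im⁻¹ * (t - z.re))^2)⁻¹) :=
    h1.comp_sub_right z.re
  have h3 : Integrable (fun t : ℝ => (z.im^2)⁻¹ * (1 + (z.im⁻¹ * (t - z.re))^2)⁻¹) :=
    h2.const_mul _
  have h4 : Integrable (fun t : ℝ => ((z.re - t)^2 + z.im^2)⁻¹) := by
    refine h3.congr (Filter.Eventually.of_forall fun t => ?_)
    field_simp
    ring_nf
  have hcont : Continuous (fun t : ℝ => ((z - (t:ℂ))^2)⁻¹) := by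
    refine Continuous.inv₀ (by continuity) fun t => pow_ne_zero _ (sub_ofReal_ne z hz t)
  refine h4.mono' hcont.aestronglyMeasurable (Filter.Eventually.of_forall fun t => ?_)
  have : ‖((z - (t:ℂ))^2)⁻¹‖ = (Complex.normSq (z - t))⁻¹ := by
    rw [norm_inv, norm_pow, Complex.sq_norm]
  rw [this, Complex.normSq_apply]
  simp [pow_two]

lemma integral_Ioi_aux (z : ℂ) (hz : z.im ≠ 0) (a : ℝ) :
    ∫ t in Ioi a, ((z - (t:ℂ))^2)⁻¹ = -(z - (a:ℂ))⁻¹ := by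
  have hderiv : ∀ x ∈ Ici a, HasDerivAt (fun t : ℝ => (z - (t:ℂ))⁻¹) (((z - (x:ℂ))^2)⁻¹) x := by
    intro x _
    have h1 : HasDerivAt (fun t : ℝ => z - (t:ℂ)) (-1) x := by
      simpa using (Complex.ofRealCLM.hasDerivAt (x := x)).const_sub z
    have h2 := ((hasDerivAt_inv (sub_ofReal_ne z hz x)).hasFDerivAt.restrictScalars ℝ).comp_hasDerivAt x h1
    convert h2 using 1
    · rfl
    · rfl
    simp
  have htend : Tendsto (fun t : ℝ => (z - (t:ℂ))⁻¹) atTop (nhds 0) := by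
    rw [tendsto_zero_iff_norm_tendsto_zero]
    simp only [norm_inv]
    apply Tendsto.inv_tendsto_atTop
    apply tendsto_atTop_mono (fun t : ℝ => by
      have : (t:ℝ) - ‖z‖ ≤ ‖z - (t:ℂ)‖ := by
        have h := norm_sub_norm_le ((t:ℂ)) z
        rw [norm_sub_rev] at h
        have h2 : t ≤ ‖(t:ℂ)‖ := by simpa using le_abs_self t
        linarith
      exact this)
    exact tendsto_atTop_add_const_right _ _ tendsto_id
  have := integral_Ioi_of_hasDerivAt_of_tendsto' hderiv
    ((integrable_aux z hz).integrableOn) htend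
  rw [this]; ring

lemma integrable_ite_aux (z : ℂ) (hz : z.im ≠ 0) (a : ℝ) :
    Integrable (fun t : ℝ => (if a ≤ t then (1:ℂ) else 0) * ((z - (t:ℂ))^2)⁻¹) := by
  have heq : (fun t : ℝ => (if a ≤ t then (1:ℂ) else 0) * ((z - (t:ℂ))^2)⁻¹)
      = (Ici a).indicator (fun t : ℝ => ((z - (t:ℂ))^2)⁻¹) := by
    funext t
    by_cases h : a ≤ t <;> simp [Set.indicator, h]
  rw [heq]
  exact ((integrable_aux z hz).integrableOn).integrable_indicator measurableSet_Ici

lemma integral_ite_aux (z : ℂ) (hz : z.im ≠ 0) (a : ℝ) :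
    ∫ t : ℝ, (if a ≤ t then (1:ℂ) else 0) * ((z - (t:ℂ))^2)⁻¹ = -(z - (a:ℂ))⁻¹ := by
  have heq : (fun t : ℝ => (if a ≤ t then (1:ℂ) else 0) * ((z - (t:ℂ))^2)⁻¹)
      = (Ici a).indicator (fun t : ℝ => ((z - (t:ℂ))^2)⁻¹) := by
    funext t
    by_cases h : a ≤ t <;> simp [Set.indicator, h]
  rw [heq, integral_indicator measurableSet_Ici, integral_Ici_eq_integral_Ioi,
    integral_Ioi_aux z hz a]

lemma card_aux (n : ℕ) (s : ℝ) (h0 : 0 ≤ s) (h1 : s ≤ 1)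
    [DecidablePred fun i : Fin n => ((i : ℕ) + 1 : ℝ) ≤ n * s] :
    ((Finset.univ.filter (fun i : Fin n => ((i : ℕ) + 1 : ℝ) ≤ n * s)).card : ℝ)
      = ((⌊(n : ℝ) * s⌋ : ℤ) : ℝ) := by
  classical
  have hns0 : (0:ℝ) ≤ n * s := mul_nonneg (Nat.cast_nonneg n) h0
  have hfl0 : 0 ≤ ⌊(n:ℝ) * s⌋ := Int.floor_nonneg.2 hns0
  set m : ℕ := (⌊(n:ℝ) * s⌋).toNat with hm
  have hmn : m ≤ n := by
    have h2 : ⌊(n:ℝ) * s⌋ ≤ ⌊((n:ℕ):ℝ)⌋ := by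
      apply Int.floor_le_floor
      nlinarith
    rw [Int.floor_natCast] at h2
    omega
  have hcond : ∀ i : Fin n, (((i : ℕ) + 1 : ℝ) ≤ n * s ↔ (i : ℕ) < m) := by
    intro i
    rw [show ((i : ℕ) + 1 : ℝ) = (((i : ℕ) + 1 : ℤ) : ℝ) by push_cast; ring, ← Int.le_floor]
    omega
  have hset : Finset.univ.filter (fun i : Fin n => ((i : ℕ) + 1 : ℝ) ≤ n * s)
      = Finset.univ.filter (fun i : Fin n => (i : ℕ) < m) := by
    apply Finset.filter_congr
    intro i _
    simp [hcond i]
  rw [hset]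
  have hcard : (Finset.univ.filter (fun i : Fin n => (i : ℕ) < m)).card = m := by
    rw [Finset.card_filter]
    rw [Fin.sum_univ_eq_sum_range (fun k => if k < m then 1 else 0)]
    rw [← Finset.card_filter]
    have : Finset.filter (fun k => k < m) (Finset.range n) = Finset.range m := by
      ext k; simp; omega
    rw [this, Finset.card_range]
  rw [hcard, hm]
  have := Int.toNat_of_nonneg hfl0
  exact_mod_cast congrArg (Int.cast : ℤ → ℝ) this


open scoped Classical in
/-- With `U` the orthogonal matrix of eigenvectors of a real symmetric matrix `A` with
eigenvalues `λ₁ ≤ ⋯ ≤ λₙ`, for `s ∈ [0,1]` and non-real `z`,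
`∫_ℝ C^n_{s,λ}/(z−λ)² dλ = −X^n(s,z)`, where
`C^n_{s,λ} = (1/√n) ∑_{i ≤ ns, j : λ_j ≤ λ} (u_{ij}² − 1/n)` and
`X^n(s,z) = (1/√n)(Tr(P_s (z−A)⁻¹) − (⌊ns⌋/n) Tr((z−A)⁻¹))`. -/
theorem integral_C_eq_neg_X
    (n : ℕ) (hn : 0 < n)
    (A U : Matrix (Fin n) (Fin n) ℝ) (lam : Fin n → ℝ)
    (hmono : Monotone lam)
    (hAsymm : A.IsSymm)
    (hU1 : U * Uᵀ = 1) (hU2 : Uᵀ * U = 1)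
    (hA : A = U * Matrix.diagonal lam * Uᵀ)
    (s : ℝ) (hs : s ∈ Set.Icc (0 : ℝ) 1)
    (z : ℂ) (hz : z.im ≠ 0) :
    (∫ t : ℝ,
        (((Real.sqrt n)⁻¹ *
            ∑ i ∈ Finset.univ.filter (fun i : Fin n => ((i : ℕ) + 1 : ℝ) ≤ n * s),
              ∑ j ∈ Finset.univ.filter (fun j : Fin n => lam j ≤ t),
                (U i j ^ 2 - 1 / n) : ℝ) : ℂ) / (z - (t : ℂ)) ^ 2)
      = - ((Real.sqrt n : ℂ)⁻¹ *
          (Matrix.trace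
              (Matrix.diagonal
                  (fun i : Fin n => if ((i : ℕ) + 1 : ℝ) ≤ n * s then (1 : ℂ) else 0) *
                (z • (1 : Matrix (Fin n) (Fin n) ℂ) - A.map (fun x : ℝ => (x : ℂ)))⁻¹)
            - ((((⌊(n : ℝ) * s⌋ : ℤ) : ℝ) / n : ℝ) : ℂ) *
              Matrix.trace
                (z • (1 : Matrix (Fin n) (Fin n) ℂ) - A.map (fun x : ℝ => (x : ℂ)))⁻¹)) := by
  -- matrix setup
  set f : ℝ → ℂ := fun x => (x:ℂ) with hf
  have hfr : f = ⇑Complex.ofRealHom := rfl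
  set Uc : Matrix (Fin n) (Fin n) ℂ := U.map f with hUc
  have hUc1 : Uc * Ucᵀ = 1 := by
    rw [hUc, hfr, ← Matrix.transpose_map, ← Matrix.map_mul, hU1,
      Matrix.map_one _ (map_zero _) (map_one _)]
  have hUc2 : Ucᵀ * Uc = 1 := by
    rw [hUc, hfr, ← Matrix.transpose_map, ← Matrix.map_mul, hU2,
      Matrix.map_one _ (map_zero _) (map_one _)]
  set D : Matrix (Fin n) (Fin n) ℂ := Matrix.diagonal (fun j => z - (lam j : ℂ)) with hD
  have hM : z • (1 : Matrix (Fin n) (Fin n) ℂ) - A.map f = Uc * D * Ucᵀ := by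
    rw [hA, hfr, Matrix.map_mul, Matrix.map_mul, ← Matrix.transpose_map,
      Matrix.diagonal_map (map_zero _)]
    rw [← hfr, ← hUc, show Uᵀ.map f = Ucᵀ by rw [hUc, Matrix.transpose_map]]
    have h1 : z • (1 : Matrix (Fin n) (Fin n) ℂ) = Uc * (z • (1 : Matrix (Fin n) (Fin n) ℂ)) * Ucᵀ := by
      rw [Matrix.mul_smul, Matrix.smul_mul, Matrix.mul_one, hUc1]
    rw [h1, ← Matrix.sub_mul, ← Matrix.mul_sub]
    congr 1
    congr 1
    rw [hD]
    rw [Matrix.smul_one_eq_diagonal, Matrix.diagonal_sub]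
  set d : Fin n → ℂ := fun j => (z - (lam j : ℂ))⁻¹ with hd
  have hne : ∀ j, z - (lam j : ℂ) ≠ 0 := fun j => sub_ofReal_ne z hz (lam j)
  have hMinv : (z • (1 : Matrix (Fin n) (Fin n) ℂ) - A.map f)⁻¹ = Uc * Matrix.diagonal d * Ucᵀ := by
    rw [hM]
    apply Matrix.inv_eq_right_inv
    calc Uc * D * Ucᵀ * (Uc * Matrix.diagonal d * Ucᵀ)
        = Uc * (D * (Ucᵀ * Uc) * Matrix.diagonal d) * Ucᵀ := by
          simp only [Matrix.mul_assoc]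
      _ = Uc * (D * Matrix.diagonal d) * Ucᵀ := by rw [hUc2, Matrix.mul_one]
      _ = Uc * 1 * Ucᵀ := by
          rw [hD, hd, Matrix.diagonal_mul_diagonal]
          have e0 : (fun i => (z - (lam i:ℂ)) * (z - (lam i:ℂ))⁻¹) = fun _ => (1:ℂ) :=
            funext fun j => mul_inv_cancel₀ (hne j)
          rw [e0, Matrix.diagonal_one]
      _ = 1 := by rw [Matrix.mul_one, hUc1]
  have htr2 : Matrix.trace (Uc * Matrix.diagonal d * Ucᵀ) = ∑ j, d j := by
    rw [Matrix.trace_mul_comm, ← Matrix.mul_assoc, hUc2, Matrix.one_mul, Matrix.trace_diagonal]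
  set p : Fin n → ℂ := fun i => if ((i : ℕ) + 1 : ℝ) ≤ n * s then (1:ℂ) else 0 with hp
  have htr1 : Matrix.trace (Matrix.diagonal p * (Uc * Matrix.diagonal d * Ucᵀ))
      = ∑ i, p i * ∑ j, (U i j : ℂ)^2 * d j := by
    have e1 : ∀ i, (Matrix.diagonal p * (Uc * Matrix.diagonal d * Ucᵀ)) i i
        = p i * ∑ j, (U i j : ℂ)^2 * d j := by
      intro i
      rw [Matrix.diagonal_mul]
      congr 1
      rw [Matrix.mul_apply]
      apply Finset.sum_congr rfl
      intro j _
      rw [Matrix.mul_diagonal, Matrix.transpose_apply]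
      simp [hUc, hf, Matrix.map_apply, Matrix.mul_apply]
      ring
    simp only [Matrix.trace, Matrix.diag]
    exact Finset.sum_congr rfl fun i _ => e1 i
  -- the integral
  set S := Finset.univ.filter (fun i : Fin n => ((i : ℕ) + 1 : ℝ) ≤ n * s) with hS
  set g : Fin n → ℝ → ℂ := fun j t => (if lam j ≤ t then (1:ℂ) else 0) * ((z - (t:ℂ))^2)⁻¹ with hg
  have key : ∀ t : ℝ,
      (((Real.sqrt n)⁻¹ * ∑ i ∈ S, ∑ j ∈ Finset.univ.filter (fun j : Fin n => lam j ≤ t),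
          (U i j ^ 2 - 1 / n) : ℝ) : ℂ) / (z - (t : ℂ)) ^ 2
      = ((Real.sqrt n : ℂ))⁻¹ * ∑ i ∈ S, ∑ j, (((U i j ^ 2 - 1 / n : ℝ)) : ℂ) * g j t := by
    intro t
    push_cast
    rw [div_eq_mul_inv, mul_assoc]
    congr 1
    rw [Finset.sum_mul]
    apply Finset.sum_congr rfl
    intro i _
    rw [Finset.sum_filter, Finset.sum_mul]
    apply Finset.sum_congr rfl
    intro j _
    by_cases h : lam j ≤ t <;> simp [hg, h]
  have hintg : ∀ j : Fin n, Integrable (g j) := fun j => integrable_ite_aux z hz (lam j)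
  have step1 : (∫ t : ℝ,
        (((Real.sqrt n)⁻¹ * ∑ i ∈ S, ∑ j ∈ Finset.univ.filter (fun j : Fin n => lam j ≤ t),
            (U i j ^ 2 - 1 / n) : ℝ) : ℂ) / (z - (t : ℂ)) ^ 2)
      = ((Real.sqrt n : ℂ))⁻¹ * ∑ i ∈ S, ∑ j, (((U i j ^ 2 - 1 / n : ℝ)) : ℂ) * (-(z - (lam j : ℂ))⁻¹) := by
    rw [integral_congr_ae (Filter.Eventually.of_forall key)]
    rw [MeasureTheory.integral_const_mul]
    congr 1
    rw [MeasureTheory.integral_finset_sum _ (fun i _ =>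
      integrable_finset_sum _ (fun j _ => (hintg j).const_mul _))]
    apply Finset.sum_congr rfl
    intro i _
    rw [MeasureTheory.integral_finset_sum _ (fun j _ => (hintg j).const_mul _)]
    apply Finset.sum_congr rfl
    intro j _
    rw [MeasureTheory.integral_const_mul, integral_ite_aux z hz (lam j)]
  rw [step1, hMinv, htr1, htr2]
  -- final algebra
  have hpsum : ∀ w : Fin n → ℂ, ∑ i, p i * w i = ∑ i ∈ S, w i := by
    intro w
    rw [hS, Finset.sum_filter]
    apply Finset.sum_congr rfl
    intro i _
    by_cases h : ((i : ℕ) + 1 : ℝ) ≤ n * s <;> simp [hp, h]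
  rw [hpsum]
  have hcard : ((S.card : ℕ) : ℝ) = ((⌊(n : ℝ) * s⌋ : ℤ) : ℝ) := card_aux n s hs.1 hs.2
  rw [show ((((⌊(n : ℝ) * s⌋ : ℤ) : ℝ) / n : ℝ) : ℂ) = ((S.card : ℂ) / (n : ℂ)) by
    rw [← hcard]; push_cast; ring]
  rw [← mul_neg]
  congr 1
  calc ∑ i ∈ S, ∑ j, (((U i j ^ 2 - 1 / n : ℝ)) : ℂ) * (-(z - (lam j : ℂ))⁻¹)
      = ∑ i ∈ S, (-(∑ j, ((U i j : ℝ) : ℂ)^2 * d j) + (1/(n:ℂ)) * ∑ j, d j) := by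
        apply Finset.sum_congr rfl
        intro i _
        calc ∑ j, (((U i j ^ 2 - 1 / n : ℝ)) : ℂ) * (-(z - (lam j : ℂ))⁻¹)
            = ∑ j, (-(((U i j : ℝ) : ℂ)^2 * d j) + (1/(n:ℂ)) * d j) := by
              apply Finset.sum_congr rfl
              intro j _
              rw [hd]
              push_cast
              ring
          _ = -(∑ j, ((U i j : ℝ) : ℂ)^2 * d j) + (1/(n:ℂ)) * ∑ j, d j := by
              rw [Finset.sum_add_distrib, Finset.sum_neg_distrib, ← Finset.mul_sum]
    _ = -(∑ i ∈ S, ∑ j, ((U i j : ℝ) : ℂ)^2 * d j) + S.card • ((1/(n:ℂ)) * ∑ j, d j) := by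
        rw [Finset.sum_add_distrib, Finset.sum_neg_distrib, Finset.sum_const]
    _ = -(∑ i ∈ S, ∑ j, ((U i j : ℝ) : ℂ)^2 * d j - (S.card : ℂ) / (n:ℂ) * ∑ j, d j) := by
        rw [nsmul_eq_mul]
        ring
end

section
/- Let n ≥ 4, let (X₁, …, Xₙ) be an exchangeable random vector of real random variables with finite fourth moments, and let α₁, …, αₙ be complex numbers with α₁ + ⋯ + αₙ = 0. Set sum₄(α) := ∑_{i=1}^n α_i⁴ and sum_{2,2}(α) := ∑_{i≠j} α_i² α_j². Then E[(∑_{i=1}^n α_i X_i)⁴] = sum₄(α)·(E[X₁⁴] − 4E[X₁³X₂] + 6E[X₁²X₂X₃] − 3E[X₁X₂X₃X₄]) + sum_{2,2}(α)·(3E[X₁²X₂²] − 6E[X₁²X₂X₃] + 3E[X₁X₂X₃X₄]). -/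
open MeasureTheory
open Function
open scoped ENNReal

/-- Any injection can be carried to any other injection by a permutation of the codomain. -/
private lemma exists_perm_comp' {α β : Type*} [Finite α] [Fintype β] [DecidableEq β]
    (f g : α → β) (hf : Injective f) (hg : Injective g) :
    ∃ σ : Equiv.Perm β, ∀ t, σ (f t) = g t := by
  classical
  let e : {x // x ∈ Set.range f} ≃ {x // x ∈ Set.range g} :=
    (Equiv.ofInjective f hf).symm.trans (Equiv.ofInjective g hg)
  refine ⟨e.extendSubtype, fun t => ?_⟩
  rw [Equiv.extendSubtype_apply_of_mem e (f t) ⟨t, rfl⟩]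
  show g ((Equiv.ofInjective f hf).symm ⟨f t, _⟩) = g t
  congr 1
  exact (Equiv.ofInjective f hf).symm_apply_apply t


set_option maxHeartbeats 2000000 in
/-- Fourth moment of a zero-sum linear combination of exchangeable random variables:
for `(X₁,…,Xₙ)` exchangeable with finite fourth moments (`n ≥ 4`) and complex numbers
`α₁,…,αₙ` summing to zero,
`E[(∑ αᵢ Xᵢ)⁴] = sum₄(α)(E[X₁⁴] − 4E[X₁³X₂] + 6E[X₁²X₂X₃] − 3E[X₁X₂X₃X₄])
  + sum₂₂(α)(3E[X₁²X₂²] − 6E[X₁²X₂X₃] + 3E[X₁X₂X₃X₄])`. -/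
theorem exchangeable_fourth_moment
    {Ω : Type*} [MeasureSpace Ω] [IsProbabilityMeasure (volume : Measure Ω)]
    (n : ℕ) (hn : 4 ≤ n) (X : Ω → Fin n → ℝ)
    (hXmeas : Measurable X)
    (hL4 : ∀ i, MemLp (fun ω => X ω i) 4 (volume : Measure Ω))
    (hexch : ∀ σ : Equiv.Perm (Fin n),
      Measure.map (fun ω => X ω ∘ σ) (volume : Measure Ω)
        = Measure.map X (volume : Measure Ω))
    (α : Fin n → ℂ) (hα : ∑ i, α i = 0) :
    (∫ ω, (∑ i, α i * (X ω i : ℂ)) ^ 4)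
      = (∑ i, (α i) ^ 4) *
          (((∫ ω, (X ω ⟨0, by omega⟩) ^ 4 : ℝ) : ℂ)
            - 4 * ((∫ ω, (X ω ⟨0, by omega⟩) ^ 3 * X ω ⟨1, by omega⟩ : ℝ) : ℂ)
            + 6 * ((∫ ω, (X ω ⟨0, by omega⟩) ^ 2 * X ω ⟨1, by omega⟩ * X ω ⟨2, by omega⟩ : ℝ) : ℂ)
            - 3 * ((∫ ω, X ω ⟨0, by omega⟩ * X ω ⟨1, by omega⟩ * X ω ⟨2, by omega⟩
                * X ω ⟨3, by omega⟩ : ℝ) : ℂ))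
        + (∑ i, ∑ j ∈ Finset.univ.erase i, (α i) ^ 2 * (α j) ^ 2) *
          (3 * ((∫ ω, (X ω ⟨0, by omega⟩) ^ 2 * (X ω ⟨1, by omega⟩) ^ 2 : ℝ) : ℂ)
            - 6 * ((∫ ω, (X ω ⟨0, by omega⟩) ^ 2 * X ω ⟨1, by omega⟩ * X ω ⟨2, by omega⟩ : ℝ) : ℂ)
            + 3 * ((∫ ω, X ω ⟨0, by omega⟩ * X ω ⟨1, by omega⟩ * X ω ⟨2, by omega⟩
                * X ω ⟨3, by omega⟩ : ℝ) : ℂ)) := by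
  classical
  set M : Fin n → Fin n → Fin n → Fin n → ℝ :=
    fun i j k l => ∫ ω, X ω i * X ω j * X ω k * X ω l with hMdef
  have hM : ∀ i j k l, M i j k l = ∫ ω, X ω i * X ω j * X ω k * X ω l := fun _ _ _ _ => rfl
  have Minv : ∀ (σ : Equiv.Perm (Fin n)) i j k l,
      M (σ i) (σ j) (σ k) (σ l) = M i j k l := by
    intro σ i j k l
    have hg : Measurable (fun v : Fin n → ℝ => v i * v j * v k * v l) :=
      (((measurable_pi_apply i).mul (measurable_pi_apply j)).mul
        (measurable_pi_apply k)).mul (measurable_pi_apply l)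
    have hXσ : Measurable (fun ω => X ω ∘ σ) :=
      measurable_pi_lambda _ (fun a => (measurable_pi_apply (σ a)).comp hXmeas)
    calc M (σ i) (σ j) (σ k) (σ l)
        = ∫ ω, (fun v : Fin n → ℝ => v i * v j * v k * v l) (X ω ∘ σ) := rfl
      _ = ∫ v, v i * v j * v k * v l ∂(Measure.map (fun ω => X ω ∘ σ) volume) :=
          (integral_map hXσ.aemeasurable hg.aestronglyMeasurable).symm
      _ = ∫ v, v i * v j * v k * v l ∂(Measure.map X volume) := by rw [hexch σ]
      _ = M i j k l := integral_map hXmeas.aemeasurable hg.aestronglyMeasurable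
  have exists3 : ∀ a b c : Fin n, ∃ d : Fin n, d ≠ a ∧ d ≠ b ∧ d ≠ c := by
    intro a b c
    by_contra h
    push_neg at h
    have hsub : (Finset.univ : Finset (Fin n)) ⊆ {a, b, c} := by
      intro d _
      have hd := h d
      simp only [Finset.mem_insert, Finset.mem_singleton]
      by_cases h1 : d = a
      · exact Or.inl h1
      · by_cases h2 : d = b
        · exact Or.inr (Or.inl h2)
        · exact Or.inr (Or.inr (hd h1 h2))
    have := Finset.card_le_card hsub
    simp [Finset.card_univ] at this
    have h3 : ({a, b, c} : Finset (Fin n)).card ≤ 3 :=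
      (Finset.card_insert_le _ _).trans (by simpa using Nat.add_le_add_right (Finset.card_insert_le b {c}) 1)
    omega
  set e0 : Fin n := ⟨0, by omega⟩ with he0
  set e1 : Fin n := ⟨1, by omega⟩ with he1
  set e2 : Fin n := ⟨2, by omega⟩ with he2
  set e3 : Fin n := ⟨3, by omega⟩ with he3
  have perm4 : ∀ a b c d : Fin n, a ≠ b → a ≠ c → a ≠ d → b ≠ c → b ≠ d → c ≠ d →
      ∃ σ : Equiv.Perm (Fin n), σ e0 = a ∧ σ e1 = b ∧ σ e2 = c ∧ σ e3 = d := by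
    intro a b c d hab hac had hbc hbd hcd
    have hf : Injective ![e0, e1, e2, e3] := by
      intro s t h
      fin_cases s <;> fin_cases t <;> simp_all [he0, he1, he2, he3, Fin.ext_iff]
    have hg : Injective ![a, b, c, d] := by
      intro s t h
      fin_cases s <;> fin_cases t <;> simp_all
    obtain ⟨σ, hσ⟩ := exists_perm_comp' _ _ hf hg
    exact ⟨σ, hσ 0, hσ 1, hσ 2, hσ 3⟩
  -- value lemmas
  have vm4 : ∀ a : Fin n, M a a a a = M e0 e0 e0 e0 := by
    intro a
    have h := Minv (Equiv.swap e0 a) e0 e0 e0 e0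
    rwa [Equiv.swap_apply_left] at h
  have vm1111 : ∀ a b c d : Fin n, a ≠ b → a ≠ c → a ≠ d → b ≠ c → b ≠ d → c ≠ d →
      M a b c d = M e0 e1 e2 e3 := by
    intro a b c d hab hac had hbc hbd hcd
    obtain ⟨σ, h0, h1, h2, h3⟩ := perm4 a b c d hab hac had hbc hbd hcd
    have h := Minv σ e0 e1 e2 e3
    rwa [h0, h1, h2, h3] at h
  have vm31 : ∀ a b : Fin n, a ≠ b → M a a a b = M e0 e0 e0 e1 := by
    intro a b hab
    obtain ⟨c, hca, hcb, -⟩ := exists3 a b b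
    obtain ⟨d, hda, hdb, hdc⟩ := exists3 a b c
    obtain ⟨σ, h0, h1, -, -⟩ := perm4 a b c d hab (Ne.symm hca) (Ne.symm hda)
      (Ne.symm hcb) (Ne.symm hdb) (Ne.symm hdc)
    have h := Minv σ e0 e0 e0 e1
    rwa [h0, h1] at h
  have vm22 : ∀ a b : Fin n, a ≠ b → M a a b b = M e0 e0 e1 e1 := by
    intro a b hab
    obtain ⟨c, hca, hcb, -⟩ := exists3 a b b
    obtain ⟨d, hda, hdb, hdc⟩ := exists3 a b c
    obtain ⟨σ, h0, h1, -, -⟩ := perm4 a b c d hab (Ne.symm hca) (Ne.symm hda)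
      (Ne.symm hcb) (Ne.symm hdb) (Ne.symm hdc)
    have h := Minv σ e0 e0 e1 e1
    rwa [h0, h1] at h
  have vm211 : ∀ a b c : Fin n, a ≠ b → a ≠ c → b ≠ c → M a a b c = M e0 e0 e1 e2 := by
    intro a b c hab hac hbc
    obtain ⟨d, hda, hdb, hdc⟩ := exists3 a b c
    obtain ⟨σ, h0, h1, h2, -⟩ := perm4 a b c d hab hac (Ne.symm hda) hbc
      (Ne.symm hdb) (Ne.symm hdc)
    have h := Minv σ e0 e0 e1 e2
    rwa [h0, h1, h2] at h
  set D : Fin n → Fin n → ℂ := fun a b => if a = b then 1 else 0 with hD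
  set q4 : ℂ := ((M e0 e0 e0 e0 : ℝ) : ℂ) with hq4
  set q31 : ℂ := ((M e0 e0 e0 e1 : ℝ) : ℂ) with hq31
  set q22 : ℂ := ((M e0 e0 e1 e1 : ℝ) : ℂ) with hq22
  set q211 : ℂ := ((M e0 e0 e1 e2 : ℝ) : ℂ) with hq211
  set q1111 : ℂ := ((M e0 e1 e2 e3 : ℝ) : ℂ) with hq1111
  -- reordering helper
  have Mre : ∀ i j k l i' j' k' l' : Fin n,
      (∀ ω, X ω i * X ω j * X ω k * X ω l = X ω i' * X ω j' * X ω k' * X ω l') →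
      M i j k l = M i' j' k' l' := by
    intro i j k l i' j' k' l' h
    rw [hM, hM]
    congr 1
    funext ω
    exact h ω
  have pointwise : ∀ i j k l : Fin n, ((M i j k l : ℝ) : ℂ)
      = q1111
        + (q211 - q1111) * (D i j + D i k + D i l + D j k + D j l + D k l)
        + (q22 - 2 * q211 + q1111) * (D i j * D k l + D i k * D j l + D i l * D j k)
        + (q31 - 3 * q211 + 2 * q1111) * (D i j * D i k + D i j * D i l + D i k * D i l + D j k * D j l)
        + (q4 - 4 * q31 - 3 * q22 + 12 * q211 - 6 * q1111) * (D i j * D i k * D i l) := by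
    intro i j k l
    rcases eq_or_ne i j with rfl | hij
    · rcases eq_or_ne i k with rfl | hik
      · rcases eq_or_ne i l with rfl | hil
        · -- M i i i i
          rw [show ((M i i i i : ℝ) : ℂ) = q4 from by rw [hq4, vm4 i]]
          simp [hD] <;> ring
        · -- M i i i l, i ≠ l
          rw [show ((M i i i l : ℝ) : ℂ) = q31 from by rw [hq31, vm31 i l hil]]
          simp [hD, hil, hil.symm] <;> ring
      · rcases eq_or_ne i l with rfl | hil
        · -- M i i k i, i ≠ k
          rw [show ((M i i k i : ℝ) : ℂ) = q31 from by
            rw [hq31, Mre i i k i i i i k (fun ω => by ring), vm31 i k hik]]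
          simp [hD, hik, hik.symm] <;> ring
        · rcases eq_or_ne k l with rfl | hkl
          · -- M i i k k, i ≠ k
            rw [show ((M i i k k : ℝ) : ℂ) = q22 from by rw [hq22, vm22 i k hik]]
            simp [hD, hik, hik.symm] <;> ring
          · -- M i i k l, i,k,l distinct
            rw [show ((M i i k l : ℝ) : ℂ) = q211 from by rw [hq211, vm211 i k l hik hil hkl]]
            simp [hD, hik, hik.symm, hil, hil.symm, hkl, hkl.symm] <;> ring
    · rcases eq_or_ne i k with rfl | hik
      · rcases eq_or_ne j l with rfl | hjl
        · -- M i j i j, i ≠ j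
          rw [show ((M i j i j : ℝ) : ℂ) = q22 from by
            rw [hq22, Mre i j i j i i j j (fun ω => by ring), vm22 i j hij]]
          simp [hD, hij, hij.symm] <;> ring
        · rcases eq_or_ne i l with rfl | hil
          · -- M i j i i, i ≠ j
            rw [show ((M i j i i : ℝ) : ℂ) = q31 from by
              rw [hq31, Mre i j i i i i i j (fun ω => by ring), vm31 i j hij]]
            simp [hD, hij, hij.symm] <;> ring
          · -- M i j i l, i,j,l distinct
            rw [show ((M i j i l : ℝ) : ℂ) = q211 from by
              rw [hq211, Mre i j i l i i j l (fun ω => by ring), vm211 i j l hij hil hjl]]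
            simp [hD, hij, hij.symm, hil, hil.symm, hjl, hjl.symm] <;> ring
      · rcases eq_or_ne j k with rfl | hjk
        · rcases eq_or_ne j l with rfl | hjl
          · -- M i j j j, i ≠ j
            rw [show ((M i j j j : ℝ) : ℂ) = q31 from by
              rw [hq31, Mre i j j j j j j i (fun ω => by ring), vm31 j i hij.symm]]
            simp [hD, hij, hij.symm] <;> ring
          · rcases eq_or_ne i l with rfl | hil
            · -- M i j j i, i ≠ j
              rw [show ((M i j j i : ℝ) : ℂ) = q22 from by
                rw [hq22, Mre i j j i i i j j (fun ω => by ring), vm22 i j hij]]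
              simp [hD, hij, hij.symm] <;> ring
            · -- M i j j l, i,j,l distinct
              rw [show ((M i j j l : ℝ) : ℂ) = q211 from by
                rw [hq211, Mre i j j l j j i l (fun ω => by ring),
                  vm211 j i l hij.symm hjl (fun h => hil h)]]
              simp [hD, hij, hij.symm, hil, hil.symm, hjl, hjl.symm] <;> ring
        · rcases eq_or_ne i l with rfl | hil
          · -- M i j k i, i,j,k distinct
            rw [show ((M i j k i : ℝ) : ℂ) = q211 from by
              rw [hq211, Mre i j k i i i j k (fun ω => by ring), vm211 i j k hij hik hjk]]
            simp [hD, hij, hij.symm, hik, hik.symm, hjk, hjk.symm] <;> ring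
          · rcases eq_or_ne j l with rfl | hjl
            · -- M i j k j, i,j,k distinct
              rw [show ((M i j k j : ℝ) : ℂ) = q211 from by
                rw [hq211, Mre i j k j j j i k (fun ω => by ring),
                  vm211 j i k hij.symm hjk hik]]
              simp [hD, hij, hij.symm, hik, hik.symm, hjk, hjk.symm] <;> ring
            · rcases eq_or_ne k l with rfl | hkl
              · -- M i j k k, i,j,k distinct
                rw [show ((M i j k k : ℝ) : ℂ) = q211 from by
                  rw [hq211, Mre i j k k k k i j (fun ω => by ring),
                    vm211 k i j hik.symm hjk.symm hij]]
                simp [hD, hij, hij.symm, hik, hik.symm, hjk, hjk.symm] <;> ring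
              · -- all distinct
                rw [show ((M i j k l : ℝ) : ℂ) = q1111 from by
                  rw [hq1111, vm1111 i j k l hij hik hil hjk hjl hkl]]
                simp [hD, hij, hij.symm, hik, hik.symm, hil, hil.symm, hjk, hjk.symm,
                  hjl, hjl.symm, hkl, hkl.symm] <;> ring
  have h2 : ∀ i j, MemLp (fun ω => X ω i * X ω j) 2 (volume : Measure Ω) := by
    intro i j
    have h := MemLp.smul (𝕜 := ℝ) (hL4 j) (hL4 i) (p := 4) (q := 4) (r := 2) (hpqr := ⟨by
      rw [show (4 : ℝ≥0∞) = 2 * 2 by norm_num, ENNReal.mul_inv (Or.inl two_ne_zero)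
        (Or.inl ENNReal.ofNat_ne_top), ← mul_add, ENNReal.inv_two_add_inv_two, mul_one]⟩)
    simpa [Pi.smul_apply', Pi.smul_apply, smul_eq_mul, Pi.mul_def] using h
  have h1 : ∀ i j k l, Integrable (fun ω => X ω i * X ω j * X ω k * X ω l)
      (volume : Measure Ω) := by
    intro i j k l
    have h := MemLp.smul (𝕜 := ℝ) (h2 k l) (h2 i j) (p := 2) (q := 2) (r := 1) (hpqr := ⟨by
      rw [inv_one, ENNReal.inv_two_add_inv_two]⟩)
    have h' : MemLp (fun ω => (X ω i * X ω j) * (X ω k * X ω l)) 1 (volume : Measure Ω) := by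
      simpa [Pi.smul_apply', Pi.smul_apply, smul_eq_mul, Pi.mul_def] using h
    have heq : (fun ω => (X ω i * X ω j) * (X ω k * X ω l))
        = fun ω => X ω i * X ω j * X ω k * X ω l := funext fun ω => by ring
    rw [heq] at h'
    exact memLp_one_iff_integrable.mp h'
  have hInt : ∀ i j k l, Integrable
      (fun ω => (α i * α j * α k * α l) * ((X ω i * X ω j * X ω k * X ω l : ℝ) : ℂ))
      (volume : Measure Ω) :=
    fun i j k l => ((h1 i j k l).ofReal (𝕜 := ℂ)).const_mul _
  -- expansion of the fourth power
  have hfun : (fun ω => (∑ i, α i * ((X ω i : ℝ) : ℂ)) ^ 4)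
      = fun ω => ∑ i, ∑ j, ∑ k, ∑ l,
          (α i * α j * α k * α l) * ((X ω i * X ω j * X ω k * X ω l : ℝ) : ℂ) := by
    funext ω
    rw [show ∀ z : ℂ, z ^ 4 = z * z * z * z from fun z => by ring]
    simp only [Finset.sum_mul, Finset.mul_sum]
    refine Finset.sum_congr rfl fun i _ => Finset.sum_congr rfl fun j _ =>
      Finset.sum_congr rfl fun k _ => Finset.sum_congr rfl fun l _ => ?_
    push_cast
    ring
  have LHSeq : (∫ ω, (∑ i, α i * ((X ω i : ℝ) : ℂ)) ^ 4)
      = ∑ i, ∑ j, ∑ k, ∑ l, α i * α j * α k * α l * ((M i j k l : ℝ) : ℂ) := by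
    rw [hfun]
    rw [integral_finset_sum _ (fun i _ => integrable_finset_sum _ (fun j _ =>
      integrable_finset_sum _ (fun k _ => integrable_finset_sum _ (fun l _ => hInt i j k l))))]
    refine Finset.sum_congr rfl fun i _ => ?_
    rw [integral_finset_sum _ (fun j _ => integrable_finset_sum _ (fun k _ =>
      integrable_finset_sum _ (fun l _ => hInt i j k l)))]
    refine Finset.sum_congr rfl fun j _ => ?_
    rw [integral_finset_sum _ (fun k _ => integrable_finset_sum _ (fun l _ => hInt i j k l))]
    refine Finset.sum_congr rfl fun k _ => ?_
    rw [integral_finset_sum _ (fun l _ => hInt i j k l)]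
    refine Finset.sum_congr rfl fun l _ => ?_
    rw [integral_const_mul]
    congr 1
    rw [hM]
    exact integral_ofReal
  have hD1 : ∀ a : Fin n, D a a = 1 := fun a => by simp [hD]
  have hD0 : ∀ a b : Fin n, a ≠ b → D a b = 0 := fun a b h => by simp [hD, h]
  have fold2 : ∀ (f g : Fin n → ℂ) (c : ℂ),
      (∑ i, ∑ j, f i * g j * c) = (∑ x, f x) * (∑ x, g x) * c := by
    intro f g c
    simp only [← Finset.sum_mul, ← Finset.mul_sum]
  have fold3 : ∀ (f g h : Fin n → ℂ) (c : ℂ),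
      (∑ i, ∑ j, ∑ k, f i * g j * h k * c) = (∑ x, f x) * (∑ x, g x) * (∑ x, h x) * c := by
    intro f g h c
    simp only [← Finset.sum_mul, ← Finset.mul_sum]
  have fold4 : ∀ (f g h p : Fin n → ℂ) (c : ℂ),
      (∑ i, ∑ j, ∑ k, ∑ l, f i * g j * h k * p l * c)
        = (∑ x, f x) * (∑ x, g x) * (∑ x, h x) * (∑ x, p x) * c := by
    intro f g h p c
    simp only [← Finset.sum_mul, ← Finset.mul_sum]
  -- H0
  have H0 : ∀ c : ℂ, (∑ i, ∑ j, ∑ k, ∑ l, α i * α j * α k * α l * c) = 0 := by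
    intro c
    rw [show (∑ i, ∑ j, ∑ k, ∑ l : Fin n, α i * α j * α k * α l * c)
        = (∑ x, α x) * (∑ x, α x) * (∑ x, α x) * (∑ x, α x) * c from fold4 α α α α c]
    rw [hα]; ring
  -- single deltas
  have H_ij : ∀ c : ℂ, (∑ i, ∑ j, ∑ k, ∑ l, α i * α j * α k * α l * D i j * c) = 0 := by
    intro c
    have col : ∀ i : Fin n, (∑ j, ∑ k, ∑ l, α i * α j * α k * α l * D i j * c)
        = ∑ k, ∑ l, (α i * α i) * α k * α l * c := by
      intro i
      rw [Finset.sum_eq_single i]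
      · simp only [hD1, mul_one]
      · intro b _ hb
        simp only [hD0 i b (Ne.symm hb), mul_zero, zero_mul, Finset.sum_const_zero]
      · intro h; exact absurd (Finset.mem_univ i) h
    simp only [col]
    rw [show (∑ i, ∑ k, ∑ l : Fin n, (α i * α i) * α k * α l * c)
        = (∑ x, α x * α x) * (∑ x, α x) * (∑ x, α x) * c from
      fold3 (fun x => α x * α x) α α c]
    rw [hα]; ring
  have H_ik : ∀ c : ℂ, (∑ i, ∑ j, ∑ k, ∑ l, α i * α j * α k * α l * D i k * c) = 0 := by
    intro c
    have col : ∀ i j : Fin n, (∑ k, ∑ l, α i * α j * α k * α l * D i k * c)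
        = ∑ l, (α i * α i) * α j * α l * c := by
      intro i j
      rw [Finset.sum_eq_single i]
      · simp only [hD1, mul_one]
        exact Finset.sum_congr rfl fun l _ => by ring
      · intro b _ hb
        simp only [hD0 i b (Ne.symm hb), mul_zero, zero_mul, Finset.sum_const_zero]
      · intro h; exact absurd (Finset.mem_univ i) h
    simp only [col]
    rw [show (∑ i, ∑ j, ∑ l : Fin n, (α i * α i) * α j * α l * c)
        = (∑ x, α x * α x) * (∑ x, α x) * (∑ x, α x) * c from
      fold3 (fun x => α x * α x) α α c]
    rw [hα]; ring
  have H_il : ∀ c : ℂ, (∑ i, ∑ j, ∑ k, ∑ l, α i * α j * α k * α l * D i l * c) = 0 := by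
    intro c
    have col : ∀ i j k : Fin n, (∑ l, α i * α j * α k * α l * D i l * c)
        = (α i * α i) * α j * α k * c := by
      intro i j k
      rw [Finset.sum_eq_single i]
      · simp only [hD1, mul_one]; ring
      · intro b _ hb
        simp only [hD0 i b (Ne.symm hb), mul_zero, zero_mul]
      · intro h; exact absurd (Finset.mem_univ i) h
    simp only [col]
    rw [show (∑ i, ∑ j, ∑ k : Fin n, (α i * α i) * α j * α k * c)
        = (∑ x, α x * α x) * (∑ x, α x) * (∑ x, α x) * c from
      fold3 (fun x => α x * α x) α α c]
    rw [hα]; ring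
  have H_jk : ∀ c : ℂ, (∑ i, ∑ j, ∑ k, ∑ l, α i * α j * α k * α l * D j k * c) = 0 := by
    intro c
    have col : ∀ i j : Fin n, (∑ k, ∑ l, α i * α j * α k * α l * D j k * c)
        = ∑ l, α i * (α j * α j) * α l * c := by
      intro i j
      rw [Finset.sum_eq_single j]
      · simp only [hD1, mul_one]
        exact Finset.sum_congr rfl fun l _ => by ring
      · intro b _ hb
        simp only [hD0 j b (Ne.symm hb), mul_zero, zero_mul, Finset.sum_const_zero]
      · intro h; exact absurd (Finset.mem_univ j) h
    simp only [col]
    rw [show (∑ i, ∑ j, ∑ l : Fin n, α i * (α j * α j) * α l * c)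
        = (∑ x, α x) * (∑ x, α x * α x) * (∑ x, α x) * c from
      fold3 α (fun x => α x * α x) α c]
    rw [hα]; ring
  have H_jl : ∀ c : ℂ, (∑ i, ∑ j, ∑ k, ∑ l, α i * α j * α k * α l * D j l * c) = 0 := by
    intro c
    have col : ∀ i j k : Fin n, (∑ l, α i * α j * α k * α l * D j l * c)
        = α i * (α j * α j) * α k * c := by
      intro i j k
      rw [Finset.sum_eq_single j]
      · simp only [hD1, mul_one]; ring
      · intro b _ hb
        simp only [hD0 j b (Ne.symm hb), mul_zero, zero_mul]
      · intro h; exact absurd (Finset.mem_univ j) h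
    simp only [col]
    rw [show (∑ i, ∑ j, ∑ k : Fin n, α i * (α j * α j) * α k * c)
        = (∑ x, α x) * (∑ x, α x * α x) * (∑ x, α x) * c from
      fold3 α (fun x => α x * α x) α c]
    rw [hα]; ring
  have H_kl : ∀ c : ℂ, (∑ i, ∑ j, ∑ k, ∑ l, α i * α j * α k * α l * D k l * c) = 0 := by
    intro c
    have col : ∀ i j k : Fin n, (∑ l, α i * α j * α k * α l * D k l * c)
        = α i * α j * (α k * α k) * c := by
      intro i j k
      rw [Finset.sum_eq_single k]
      · simp only [hD1, mul_one]; ring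
      · intro b _ hb
        simp only [hD0 k b (Ne.symm hb), mul_zero, zero_mul]
      · intro h; exact absurd (Finset.mem_univ k) h
    simp only [col]
    rw [show (∑ i, ∑ j, ∑ k : Fin n, α i * α j * (α k * α k) * c)
        = (∑ x, α x) * (∑ x, α x) * (∑ x, α x * α x) * c from
      fold3 α α (fun x => α x * α x) c]
    rw [hα]; ring
  -- (2,2) patterns
  have H_ij_kl : ∀ c : ℂ, (∑ i, ∑ j, ∑ k, ∑ l, α i * α j * α k * α l * D i j * D k l * c)
      = (∑ x, α x * α x) * (∑ x, α x * α x) * c := by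
    intro c
    have col1 : ∀ i : Fin n, (∑ j, ∑ k, ∑ l, α i * α j * α k * α l * D i j * D k l * c)
        = ∑ k, ∑ l, (α i * α i) * α k * α l * D k l * c := by
      intro i
      rw [Finset.sum_eq_single i]
      · simp only [hD1, mul_one]
      · intro b _ hb
        simp only [hD0 i b (Ne.symm hb), mul_zero, zero_mul, Finset.sum_const_zero]
      · intro h; exact absurd (Finset.mem_univ i) h
    simp only [col1]
    have col2 : ∀ i k : Fin n, (∑ l, (α i * α i) * α k * α l * D k l * c)
        = (α i * α i) * (α k * α k) * c := by
      intro i k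
      rw [Finset.sum_eq_single k]
      · simp only [hD1, mul_one]; ring
      · intro b _ hb
        simp only [hD0 k b (Ne.symm hb), mul_zero, zero_mul]
      · intro h; exact absurd (Finset.mem_univ k) h
    simp only [col2]
    exact fold2 (fun x => α x * α x) (fun x => α x * α x) c
  have H_ik_jl : ∀ c : ℂ, (∑ i, ∑ j, ∑ k, ∑ l, α i * α j * α k * α l * D i k * D j l * c)
      = (∑ x, α x * α x) * (∑ x, α x * α x) * c := by
    intro c
    have col1 : ∀ i j : Fin n, (∑ k, ∑ l, α i * α j * α k * α l * D i k * D j l * c)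
        = ∑ l, (α i * α i) * α j * α l * D j l * c := by
      intro i j
      rw [Finset.sum_eq_single i]
      · simp only [hD1, mul_one]
        exact Finset.sum_congr rfl fun l _ => by ring
      · intro b _ hb
        simp only [hD0 i b (Ne.symm hb), mul_zero, zero_mul, Finset.sum_const_zero]
      · intro h; exact absurd (Finset.mem_univ i) h
    simp only [col1]
    have col2 : ∀ i j : Fin n, (∑ l, (α i * α i) * α j * α l * D j l * c)
        = (α i * α i) * (α j * α j) * c := by
      intro i j
      rw [Finset.sum_eq_single j]
      · simp only [hD1, mul_one]; ring
      · intro b _ hb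
        simp only [hD0 j b (Ne.symm hb), mul_zero, zero_mul]
      · intro h; exact absurd (Finset.mem_univ j) h
    simp only [col2]
    exact fold2 (fun x => α x * α x) (fun x => α x * α x) c
  have H_il_jk : ∀ c : ℂ, (∑ i, ∑ j, ∑ k, ∑ l, α i * α j * α k * α l * D i l * D j k * c)
      = (∑ x, α x * α x) * (∑ x, α x * α x) * c := by
    intro c
    have col1 : ∀ i j k : Fin n, (∑ l, α i * α j * α k * α l * D i l * D j k * c)
        = (α i * α i) * α j * α k * D j k * c := by
      intro i j k
      rw [Finset.sum_eq_single i]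
      · simp only [hD1, mul_one]; ring
      · intro b _ hb
        simp only [hD0 i b (Ne.symm hb), mul_zero, zero_mul]
      · intro h; exact absurd (Finset.mem_univ i) h
    simp only [col1]
    have col2 : ∀ i j : Fin n, (∑ k, (α i * α i) * α j * α k * D j k * c)
        = (α i * α i) * (α j * α j) * c := by
      intro i j
      rw [Finset.sum_eq_single j]
      · simp only [hD1, mul_one]; ring
      · intro b _ hb
        simp only [hD0 j b (Ne.symm hb), mul_zero, zero_mul]
      · intro h; exact absurd (Finset.mem_univ j) h
    simp only [col2]
    exact fold2 (fun x => α x * α x) (fun x => α x * α x) c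
  -- (3,1) patterns
  have H_ijk : ∀ c : ℂ, (∑ i, ∑ j, ∑ k, ∑ l, α i * α j * α k * α l * D i j * D i k * c) = 0 := by
    intro c
    have col1 : ∀ i : Fin n, (∑ j, ∑ k, ∑ l, α i * α j * α k * α l * D i j * D i k * c)
        = ∑ k, ∑ l, (α i * α i) * α k * α l * D i k * c := by
      intro i
      rw [Finset.sum_eq_single i]
      · simp only [hD1, mul_one]
      · intro b _ hb
        simp only [hD0 i b (Ne.symm hb), mul_zero, zero_mul, Finset.sum_const_zero]
      · intro h; exact absurd (Finset.mem_univ i) h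
    simp only [col1]
    have col2 : ∀ i : Fin n, (∑ k, ∑ l, (α i * α i) * α k * α l * D i k * c)
        = ∑ l, (α i * α i * α i) * α l * c := by
      intro i
      rw [Finset.sum_eq_single i]
      · simp only [hD1, mul_one]

      · intro b _ hb
        simp only [hD0 i b (Ne.symm hb), mul_zero, zero_mul, Finset.sum_const_zero]
      · intro h; exact absurd (Finset.mem_univ i) h
    simp only [col2]
    rw [show (∑ i, ∑ l : Fin n, (α i * α i * α i) * α l * c)
        = (∑ x, α x * α x * α x) * (∑ x, α x) * c from fold2 (fun x => α x * α x * α x) α c]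
    rw [hα]; ring
  have H_ijl : ∀ c : ℂ, (∑ i, ∑ j, ∑ k, ∑ l, α i * α j * α k * α l * D i j * D i l * c) = 0 := by
    intro c
    have col1 : ∀ i : Fin n, (∑ j, ∑ k, ∑ l, α i * α j * α k * α l * D i j * D i l * c)
        = ∑ k, ∑ l, (α i * α i) * α k * α l * D i l * c := by
      intro i
      rw [Finset.sum_eq_single i]
      · simp only [hD1, mul_one]
      · intro b _ hb
        simp only [hD0 i b (Ne.symm hb), mul_zero, zero_mul, Finset.sum_const_zero]
      · intro h; exact absurd (Finset.mem_univ i) h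
    simp only [col1]
    have col2 : ∀ i k : Fin n, (∑ l, (α i * α i) * α k * α l * D i l * c)
        = (α i * α i * α i) * α k * c := by
      intro i k
      rw [Finset.sum_eq_single i]
      · simp only [hD1, mul_one]; ring
      · intro b _ hb
        simp only [hD0 i b (Ne.symm hb), mul_zero, zero_mul]
      · intro h; exact absurd (Finset.mem_univ i) h
    simp only [col2]
    rw [show (∑ i, ∑ k : Fin n, (α i * α i * α i) * α k * c)
        = (∑ x, α x * α x * α x) * (∑ x, α x) * c from fold2 (fun x => α x * α x * α x) α c]
    rw [hα]; ring
  have H_ikl : ∀ c : ℂ, (∑ i, ∑ j, ∑ k, ∑ l, α i * α j * α k * α l * D i k * D i l * c) = 0 := by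
    intro c
    have col1 : ∀ i j : Fin n, (∑ k, ∑ l, α i * α j * α k * α l * D i k * D i l * c)
        = ∑ l, (α i * α i) * α j * α l * D i l * c := by
      intro i j
      rw [Finset.sum_eq_single i]
      · simp only [hD1, mul_one]
        exact Finset.sum_congr rfl fun l _ => by ring
      · intro b _ hb
        simp only [hD0 i b (Ne.symm hb), mul_zero, zero_mul, Finset.sum_const_zero]
      · intro h; exact absurd (Finset.mem_univ i) h
    simp only [col1]
    have col2 : ∀ i j : Fin n, (∑ l, (α i * α i) * α j * α l * D i l * c)
        = (α i * α i * α i) * α j * c := by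
      intro i j
      rw [Finset.sum_eq_single i]
      · simp only [hD1, mul_one]; ring
      · intro b _ hb
        simp only [hD0 i b (Ne.symm hb), mul_zero, zero_mul]
      · intro h; exact absurd (Finset.mem_univ i) h
    simp only [col2]
    rw [show (∑ i, ∑ j : Fin n, (α i * α i * α i) * α j * c)
        = (∑ x, α x * α x * α x) * (∑ x, α x) * c from fold2 (fun x => α x * α x * α x) α c]
    rw [hα]; ring
  have H_jkl : ∀ c : ℂ, (∑ i, ∑ j, ∑ k, ∑ l, α i * α j * α k * α l * D j k * D j l * c) = 0 := by
    intro c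
    have col1 : ∀ i j : Fin n, (∑ k, ∑ l, α i * α j * α k * α l * D j k * D j l * c)
        = ∑ l, α i * (α j * α j) * α l * D j l * c := by
      intro i j
      rw [Finset.sum_eq_single j]
      · simp only [hD1, mul_one]
        exact Finset.sum_congr rfl fun l _ => by ring
      · intro b _ hb
        simp only [hD0 j b (Ne.symm hb), mul_zero, zero_mul, Finset.sum_const_zero]
      · intro h; exact absurd (Finset.mem_univ j) h
    simp only [col1]
    have col2 : ∀ i j : Fin n, (∑ l, α i * (α j * α j) * α l * D j l * c)
        = α i * (α j * α j * α j) * c := by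
      intro i j
      rw [Finset.sum_eq_single j]
      · simp only [hD1, mul_one]; ring
      · intro b _ hb
        simp only [hD0 j b (Ne.symm hb), mul_zero, zero_mul]
      · intro h; exact absurd (Finset.mem_univ j) h
    simp only [col2]
    rw [show (∑ i, ∑ j : Fin n, α i * (α j * α j * α j) * c)
        = (∑ x, α x) * (∑ x, α x * α x * α x) * c from fold2 α (fun x => α x * α x * α x) c]
    rw [hα]; ring
  -- the (4) pattern
  have H4 : ∀ c : ℂ, (∑ i, ∑ j, ∑ k, ∑ l, α i * α j * α k * α l * D i j * D i k * D i l * c)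
      = (∑ x, α x * α x * α x * α x) * c := by
    intro c
    have col1 : ∀ i : Fin n, (∑ j, ∑ k, ∑ l, α i * α j * α k * α l * D i j * D i k * D i l * c)
        = ∑ k, ∑ l, (α i * α i) * α k * α l * D i k * D i l * c := by
      intro i
      rw [Finset.sum_eq_single i]
      · simp only [hD1, mul_one]
      · intro b _ hb
        simp only [hD0 i b (Ne.symm hb), mul_zero, zero_mul, Finset.sum_const_zero]
      · intro h; exact absurd (Finset.mem_univ i) h
    simp only [col1]
    have col2 : ∀ i : Fin n, (∑ k, ∑ l, (α i * α i) * α k * α l * D i k * D i l * c)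
        = ∑ l, (α i * α i * α i) * α l * D i l * c := by
      intro i
      rw [Finset.sum_eq_single i]
      · simp only [hD1, mul_one]

      · intro b _ hb
        simp only [hD0 i b (Ne.symm hb), mul_zero, zero_mul, Finset.sum_const_zero]
      · intro h; exact absurd (Finset.mem_univ i) h
    simp only [col2]
    have col3 : ∀ i : Fin n, (∑ l, (α i * α i * α i) * α l * D i l * c)
        = (α i * α i * α i * α i) * c := by
      intro i
      rw [Finset.sum_eq_single i]
      · simp only [hD1, mul_one]
      · intro b _ hb
        simp only [hD0 i b (Ne.symm hb), mul_zero, zero_mul]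
      · intro h; exact absurd (Finset.mem_univ i) h
    simp only [col3]
    rw [← Finset.sum_mul]
  have grand : (∑ i, ∑ j, ∑ k, ∑ l, α i * α j * α k * α l * ((M i j k l : ℝ) : ℂ))
      = (∑ x, α x * α x) * (∑ x, α x * α x) * (3 * (q22 - 2 * q211 + q1111))
        + (∑ x, α x * α x * α x * α x) * (q4 - 4 * q31 - 3 * q22 + 12 * q211 - 6 * q1111) := by
    calc (∑ i, ∑ j, ∑ k, ∑ l, α i * α j * α k * α l * ((M i j k l : ℝ) : ℂ))
        = ∑ i, ∑ j, ∑ k, ∑ l,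
            (α i * α j * α k * α l * q1111
            + α i * α j * α k * α l * D i j * (q211 - q1111)
            + α i * α j * α k * α l * D i k * (q211 - q1111)
            + α i * α j * α k * α l * D i l * (q211 - q1111)
            + α i * α j * α k * α l * D j k * (q211 - q1111)
            + α i * α j * α k * α l * D j l * (q211 - q1111)
            + α i * α j * α k * α l * D k l * (q211 - q1111)
            + α i * α j * α k * α l * D i j * D k l * (q22 - 2 * q211 + q1111)
            + α i * α j * α k * α l * D i k * D j l * (q22 - 2 * q211 + q1111)
            + α i * α j * α k * α l * D i l * D j k * (q22 - 2 * q211 + q1111)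
            + α i * α j * α k * α l * D i j * D i k * (q31 - 3 * q211 + 2 * q1111)
            + α i * α j * α k * α l * D i j * D i l * (q31 - 3 * q211 + 2 * q1111)
            + α i * α j * α k * α l * D i k * D i l * (q31 - 3 * q211 + 2 * q1111)
            + α i * α j * α k * α l * D j k * D j l * (q31 - 3 * q211 + 2 * q1111)
            + α i * α j * α k * α l * D i j * D i k * D i l
                * (q4 - 4 * q31 - 3 * q22 + 12 * q211 - 6 * q1111)) := by
          refine Finset.sum_congr rfl fun i _ => Finset.sum_congr rfl fun j _ =>
            Finset.sum_congr rfl fun k _ => Finset.sum_congr rfl fun l _ => ?_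
          rw [pointwise i j k l]; ring
      _ = (∑ x, α x * α x) * (∑ x, α x * α x) * (3 * (q22 - 2 * q211 + q1111))
            + (∑ x, α x * α x * α x * α x)
              * (q4 - 4 * q31 - 3 * q22 + 12 * q211 - 6 * q1111) := by
          simp only [Finset.sum_add_distrib]
          rw [H0 q1111, H_ij (q211 - q1111), H_ik (q211 - q1111), H_il (q211 - q1111),
            H_jk (q211 - q1111), H_jl (q211 - q1111), H_kl (q211 - q1111),
            H_ij_kl (q22 - 2 * q211 + q1111), H_ik_jl (q22 - 2 * q211 + q1111),
            H_il_jk (q22 - 2 * q211 + q1111), H_ijk (q31 - 3 * q211 + 2 * q1111),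
            H_ijl (q31 - 3 * q211 + 2 * q1111), H_ikl (q31 - 3 * q211 + 2 * q1111),
            H_jkl (q31 - 3 * q211 + 2 * q1111),
            H4 (q4 - 4 * q31 - 3 * q22 + 12 * q211 - 6 * q1111)]
          ring
  -- final algebra
  have herase : (∑ i, ∑ j ∈ Finset.univ.erase i, α i ^ 2 * α j ^ 2)
      = (∑ x, α x * α x) * (∑ x, α x * α x) - ∑ x, α x * α x * α x * α x := by
    have h1 : ∀ i : Fin n, (∑ j ∈ Finset.univ.erase i, α i ^ 2 * α j ^ 2)
        = α i ^ 2 * (∑ x, α x ^ 2) - α i ^ 2 * α i ^ 2 := by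
      intro i
      rw [Finset.sum_erase_eq_sub (Finset.mem_univ i), ← Finset.mul_sum]
    simp only [h1]
    rw [Finset.sum_sub_distrib, ← Finset.sum_mul]
    have h2 : (∑ x, α x ^ 2) = ∑ x, α x * α x := Finset.sum_congr rfl fun x _ => by ring
    have h4 : (∑ x : Fin n, α x ^ 2 * α x ^ 2) = ∑ x, α x * α x * α x * α x :=
      Finset.sum_congr rfl fun x _ => by ring
    rw [h2, h4]
  have hpow4 : (∑ i, α i ^ 4) = ∑ x, α x * α x * α x * α x :=
    Finset.sum_congr rfl fun x _ => by ring
  have final : (∑ i, ∑ j, ∑ k, ∑ l, α i * α j * α k * α l * ((M i j k l : ℝ) : ℂ))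
      = (∑ i, α i ^ 4) * (q4 - 4 * q31 + 6 * q211 - 3 * q1111)
        + (∑ i, ∑ j ∈ Finset.univ.erase i, α i ^ 2 * α j ^ 2)
          * (3 * q22 - 6 * q211 + 3 * q1111) := by
    rw [grand, herase, hpow4]; ring
  -- identify the integrals in the statement with the canonical moments
  have hq4' : ((∫ ω, (X ω e0) ^ 4 : ℝ) : ℂ) = q4 := by
    rw [hq4]
    congr 1
    rw [hM]
    congr 1
    funext ω
    ring
  have hq31' : ((∫ ω, (X ω e0) ^ 3 * X ω e1 : ℝ) : ℂ) = q31 := by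
    rw [hq31]
    congr 1
    rw [hM]
    congr 1
    funext ω
    ring
  have hq22' : ((∫ ω, (X ω e0) ^ 2 * (X ω e1) ^ 2 : ℝ) : ℂ) = q22 := by
    rw [hq22]
    congr 1
    rw [hM]
    congr 1
    funext ω
    ring
  have hq211' : ((∫ ω, (X ω e0) ^ 2 * X ω e1 * X ω e2 : ℝ) : ℂ) = q211 := by
    rw [hq211]
    congr 1
    rw [hM]
    congr 1
    funext ω
    ring
  have hq1111' : ((∫ ω, X ω e0 * X ω e1 * X ω e2 * X ω e3 : ℝ) : ℂ) = q1111 := by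
    rw [hq1111]
  show (∫ ω, (∑ i, α i * (X ω i : ℂ)) ^ 4)
      = (∑ i, (α i) ^ 4) *
          (((∫ ω, (X ω e0) ^ 4 : ℝ) : ℂ)
            - 4 * ((∫ ω, (X ω e0) ^ 3 * X ω e1 : ℝ) : ℂ)
            + 6 * ((∫ ω, (X ω e0) ^ 2 * X ω e1 * X ω e2 : ℝ) : ℂ)
            - 3 * ((∫ ω, X ω e0 * X ω e1 * X ω e2 * X ω e3 : ℝ) : ℂ))
        + (∑ i, ∑ j ∈ Finset.univ.erase i, (α i) ^ 2 * (α j) ^ 2) *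
          (3 * ((∫ ω, (X ω e0) ^ 2 * (X ω e1) ^ 2 : ℝ) : ℂ)
            - 6 * ((∫ ω, (X ω e0) ^ 2 * X ω e1 * X ω e2 : ℝ) : ℂ)
            + 3 * ((∫ ω, X ω e0 * X ω e1 * X ω e2 * X ω e3 : ℝ) : ℂ))
  rw [hq4', hq31', hq22', hq211', hq1111', LHSeq]
  exact final
end

section
/- Let K > 0, γ > −1, κ ≥ 0, and let g : (0,∞) → ℂ be a measurable function with |g(y)| ≤ K·y^γ for 0 < y ≤ 1 and |g(y)| ≤ K·y^κ for y > 1. Then there exists δ₀ > 0, depending only on K, γ, κ, such that for every δ ≥ δ₀ the following holds: if Δ : (0,∞) → ℂ is a measurable function such that I₁ := ∫₀^∞ y^γ e^{−δy} |Δ(y)| dy < ∞ and I₂ := ∫₀^∞ y^κ e^{−δy} |Δ(y)| dy < ∞, and such that |Δ(t)| ≤ t·∫₀^∞ |g(ty)| e^{−δy} |Δ(y)| dy for all t > 0, then Δ(t) = 0 for all t > 0. -/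
open MeasureTheory

private lemma aux_integrableOn (b s : ℝ) (hb : 0 < b) (hs : -1 < s) :
    IntegrableOn (fun t : ℝ => t ^ s * Real.exp (-b * t)) (Set.Ioi 0) := by
  have h := integrableOn_rpow_mul_exp_neg_mul_rpow (p := 1) hs one_pos hb
  simpa [Real.rpow_one] using h

private lemma aux_integral (b s : ℝ) (hb : 0 < b) (hs : -1 < s) :
    ∫ t in Set.Ioi (0:ℝ), t ^ s * Real.exp (-b * t)
      = Real.Gamma (s + 1) * b ^ (-(s + 1)) := by
  have h := Real.integral_rpow_mul_exp_neg_mul_Ioi (a := s + 1) (r := b) (by linarith) hb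
  simp only [add_sub_cancel_right, ← neg_mul] at h
  rw [h, one_div, Real.inv_rpow hb.le, ← Real.rpow_neg hb.le, mul_comm]

/-- Contraction estimate: if `|g(y)| ≤ K y^γ` on `(0,1]` and `|g(y)| ≤ K y^κ` on `(1,∞)`
(with `K > 0`, `γ > −1`, `κ ≥ 0`), then there is `δ₀ > 0` depending only on `K, γ, κ` such
that for `δ ≥ δ₀`, any measurable `Δ : (0,∞) → ℂ` with
`∫₀^∞ y^γ e^{−δy}|Δ(y)| dy < ∞`, `∫₀^∞ y^κ e^{−δy}|Δ(y)| dy < ∞` and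
`|Δ(t)| ≤ t ∫₀^∞ |g(ty)| e^{−δy} |Δ(y)| dy` for all `t > 0` vanishes identically on
`(0,∞)`. -/
theorem contraction_uniqueness
    (K γ κ : ℝ) (hK : 0 < K) (hγ : -1 < γ) (hκ : 0 ≤ κ)
    (g : ℝ → ℂ) (hg_meas : Measurable g)
    (hg1 : ∀ y : ℝ, 0 < y → y ≤ 1 → ‖g y‖ ≤ K * y ^ γ)
    (hg2 : ∀ y : ℝ, 1 < y → ‖g y‖ ≤ K * y ^ κ) :
    ∃ δ₀ : ℝ, 0 < δ₀ ∧ ∀ δ : ℝ, δ₀ ≤ δ →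
      ∀ Δ : ℝ → ℂ, Measurable Δ →
        IntegrableOn (fun y : ℝ => y ^ γ * Real.exp (-δ * y) * ‖Δ y‖)
          (Set.Ioi (0 : ℝ)) →
        IntegrableOn (fun y : ℝ => y ^ κ * Real.exp (-δ * y) * ‖Δ y‖)
          (Set.Ioi (0 : ℝ)) →
        (∀ t : ℝ, 0 < t →
          ‖Δ t‖
            ≤ t * ∫ y in Set.Ioi (0 : ℝ),
                ‖g (t * y)‖ * Real.exp (-δ * y) * ‖Δ y‖) →
        ∀ t : ℝ, 0 < t → Δ t = 0 := by
  have hγ1 : (0:ℝ) < 1 + γ := by linarith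
  -- eventual smallness of the contraction factor
  have hev : ∀ᶠ δ in Filter.atTop,
      K * (Real.Gamma (2 + 2*γ) * δ ^ (-(2 + 2*γ))
        + 2 * (Real.Gamma (2 + γ + κ) * δ ^ (-(2 + γ + κ)))
        + Real.Gamma (2 + 2*κ) * δ ^ (-(2 + 2*κ))) < 1 := by
    have t1 : Filter.Tendsto (fun δ : ℝ => δ ^ (-(2 + 2*γ))) Filter.atTop (nhds 0) :=
      tendsto_rpow_neg_atTop (by linarith)
    have t2 : Filter.Tendsto (fun δ : ℝ => δ ^ (-(2 + γ + κ))) Filter.atTop (nhds 0) :=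
      tendsto_rpow_neg_atTop (by linarith)
    have t3 : Filter.Tendsto (fun δ : ℝ => δ ^ (-(2 + 2*κ))) Filter.atTop (nhds 0) :=
      tendsto_rpow_neg_atTop (by linarith)
    have hFlim := (((t1.const_mul (Real.Gamma (2 + 2*γ))).add
        ((t2.const_mul (Real.Gamma (2 + γ + κ))).const_mul 2)).add
        (t3.const_mul (Real.Gamma (2 + 2*κ)))).const_mul K
    simp only [mul_zero, add_zero, zero_add] at hFlim
    exact hFlim.eventually_lt_const one_pos
  obtain ⟨a, ha⟩ := Filter.eventually_atTop.mp (hev.and (Filter.eventually_ge_atTop (1:ℝ)))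
  refine ⟨max a 1, lt_of_lt_of_le one_pos (le_max_right a 1), ?_⟩
  intro δ hδ Δ hΔmeas hIγ hIκ hbound
  obtain ⟨hFδ, hδ1⟩ := ha δ (le_trans (le_max_left a 1) hδ)
  have hδ0 : (0:ℝ) < δ := lt_of_lt_of_le one_pos hδ1
  set Iγ := ∫ y in Set.Ioi (0:ℝ), y ^ γ * Real.exp (-δ * y) * ‖Δ y‖ with hIγdef
  set Iκ := ∫ y in Set.Ioi (0:ℝ), y ^ κ * Real.exp (-δ * y) * ‖Δ y‖ with hIκdef
  have hIγ0 : 0 ≤ Iγ := setIntegral_nonneg measurableSet_Ioi (fun y hy =>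
    mul_nonneg (mul_nonneg (Real.rpow_nonneg (le_of_lt hy) _) (Real.exp_pos _).le)
      (norm_nonneg _))
  have hIκ0 : 0 ≤ Iκ := setIntegral_nonneg measurableSet_Ioi (fun y hy =>
    mul_nonneg (mul_nonneg (Real.rpow_nonneg (le_of_lt hy) _) (Real.exp_pos _).le)
      (norm_nonneg _))
  have hgbd : ∀ x : ℝ, 0 < x → ‖g x‖ ≤ K * x ^ γ + K * x ^ κ := by
    intro x hx
    rcases le_or_gt x 1 with h | h
    · have h2 : 0 ≤ K * x ^ κ := by positivity
      linarith [hg1 x hx h]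
    · have h2 : 0 ≤ K * x ^ γ := by positivity
      linarith [hg2 x h]
  -- Step A: pointwise bound
  have keyA : ∀ t : ℝ, 0 < t →
      ‖Δ t‖ ≤ K * t ^ (1 + γ) * Iγ + K * t ^ (1 + κ) * Iκ := by
    intro t ht
    have hb := hbound t ht
    have hmono : (∫ y in Set.Ioi (0:ℝ),
          ‖g (t * y)‖ * Real.exp (-δ * y) * ‖Δ y‖)
        ≤ ∫ y in Set.Ioi (0:ℝ),
            (K * t ^ γ) * (y ^ γ * Real.exp (-δ * y) * ‖Δ y‖)
            + (K * t ^ κ) * (y ^ κ * Real.exp (-δ * y) * ‖Δ y‖) := by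
      apply integral_mono_of_nonneg
      · filter_upwards with y
        positivity
      · exact (hIγ.const_mul _).add (hIκ.const_mul _)
      · filter_upwards [self_mem_ae_restrict measurableSet_Ioi] with y hy
        have hy0 : (0:ℝ) < y := hy
        have h1 : ‖g (t * y)‖ ≤ K * (t * y) ^ γ + K * (t * y) ^ κ :=
          hgbd _ (mul_pos ht hy0)
        have h2 : (t * y) ^ γ = t ^ γ * y ^ γ := Real.mul_rpow ht.le hy0.le
        have h3 : (t * y) ^ κ = t ^ κ * y ^ κ := Real.mul_rpow ht.le hy0.le
        have hE : 0 ≤ Real.exp (-δ * y) * ‖Δ y‖ := by positivity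
        calc ‖g (t * y)‖ * Real.exp (-δ * y) * ‖Δ y‖
            = ‖g (t * y)‖ * (Real.exp (-δ * y) * ‖Δ y‖) := by ring
          _ ≤ (K * (t * y) ^ γ + K * (t * y) ^ κ)
              * (Real.exp (-δ * y) * ‖Δ y‖) :=
            mul_le_mul_of_nonneg_right h1 hE
          _ = _ := by rw [h2, h3]; ring
    have hsplit : (∫ y in Set.Ioi (0:ℝ),
            (K * t ^ γ) * (y ^ γ * Real.exp (-δ * y) * ‖Δ y‖)
            + (K * t ^ κ) * (y ^ κ * Real.exp (-δ * y) * ‖Δ y‖))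
        = (K * t ^ γ) * Iγ + (K * t ^ κ) * Iκ := by
      rw [integral_add (hIγ.const_mul _) (hIκ.const_mul _), integral_const_mul,
        integral_const_mul]
    have hmain := hb.trans (mul_le_mul_of_nonneg_left (hmono.trans_eq hsplit) ht.le)
    have hpow1 : t ^ (1 + γ) = t * t ^ γ := by rw [Real.rpow_add ht, Real.rpow_one]
    have hpow2 : t ^ (1 + κ) = t * t ^ κ := by rw [Real.rpow_add ht, Real.rpow_one]
    calc ‖Δ t‖ ≤ t * ((K * t ^ γ) * Iγ + (K * t ^ κ) * Iκ) := hmain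
      _ = K * t ^ (1 + γ) * Iγ + K * t ^ (1 + κ) * Iκ := by rw [hpow1, hpow2]; ring
  -- Step B: integrated bound
  have keyB : ∀ α : ℝ, -1 < α →
      (∫ t in Set.Ioi (0:ℝ), t ^ α * Real.exp (-δ * t) * ‖Δ t‖)
        ≤ K * Iγ * (Real.Gamma (α + 2 + γ) * δ ^ (-(α + 2 + γ)))
          + K * Iκ * (Real.Gamma (α + 2 + κ) * δ ^ (-(α + 2 + κ))) := by
    intro α hα
    have hsγ : (-1:ℝ) < α + 1 + γ := by linarith
    have hsκ : (-1:ℝ) < α + 1 + κ := by linarith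
    have hint1 := aux_integrableOn δ (α + 1 + γ) hδ0 hsγ
    have hint2 := aux_integrableOn δ (α + 1 + κ) hδ0 hsκ
    have hmono : (∫ t in Set.Ioi (0:ℝ), t ^ α * Real.exp (-δ * t) * ‖Δ t‖)
        ≤ ∫ t in Set.Ioi (0:ℝ),
            (K * Iγ) * (t ^ (α + 1 + γ) * Real.exp (-δ * t))
            + (K * Iκ) * (t ^ (α + 1 + κ) * Real.exp (-δ * t)) := by
      apply integral_mono_of_nonneg
      · filter_upwards [self_mem_ae_restrict measurableSet_Ioi] with t ht
        exact mul_nonneg (mul_nonneg (Real.rpow_nonneg (le_of_lt ht) _) (Real.exp_pos _).le)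
          (norm_nonneg _)
      · exact (hint1.const_mul _).add (hint2.const_mul _)
      · filter_upwards [self_mem_ae_restrict measurableSet_Ioi] with t ht
        have ht0 : (0:ℝ) < t := ht
        have h1 := keyA t ht0
        have hEα : 0 ≤ t ^ α * Real.exp (-δ * t) := by positivity
        have hp1 : t ^ (α + 1 + γ) = t ^ α * t ^ (1 + γ) := by
          rw [show α + 1 + γ = α + (1 + γ) by ring, Real.rpow_add ht0]
        have hp2 : t ^ (α + 1 + κ) = t ^ α * t ^ (1 + κ) := by
          rw [show α + 1 + κ = α + (1 + κ) by ring, Real.rpow_add ht0]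
        calc t ^ α * Real.exp (-δ * t) * ‖Δ t‖
            ≤ t ^ α * Real.exp (-δ * t)
              * (K * t ^ (1 + γ) * Iγ + K * t ^ (1 + κ) * Iκ) := by
              calc t ^ α * Real.exp (-δ * t) * ‖Δ t‖
                  = t ^ α * Real.exp (-δ * t) * ‖Δ t‖ := rfl
                _ ≤ _ := mul_le_mul_of_nonneg_left h1 hEα
          _ = _ := by rw [hp1, hp2]; ring
    have hval : (∫ t in Set.Ioi (0:ℝ),
            (K * Iγ) * (t ^ (α + 1 + γ) * Real.exp (-δ * t))
            + (K * Iκ) * (t ^ (α + 1 + κ) * Real.exp (-δ * t)))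
        = K * Iγ * (Real.Gamma (α + 2 + γ) * δ ^ (-(α + 2 + γ)))
          + K * Iκ * (Real.Gamma (α + 2 + κ) * δ ^ (-(α + 2 + κ))) := by
      rw [integral_add (hint1.const_mul _) (hint2.const_mul _), integral_const_mul,
        integral_const_mul, aux_integral δ (α + 1 + γ) hδ0 hsγ,
        aux_integral δ (α + 1 + κ) hδ0 hsκ]
      ring_nf
    exact hmono.trans_eq hval
  -- Step C: contraction
  have hBγ := keyB γ hγ
  have hBκ := keyB κ (by linarith)
  rw [← hIγdef, show γ + 2 + γ = 2 + 2*γ by ring, show γ + 2 + κ = 2 + γ + κ by ring] at hBγ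
  rw [← hIκdef, show κ + 2 + γ = 2 + γ + κ by ring, show κ + 2 + κ = 2 + 2*κ by ring] at hBκ
  set T1 := Real.Gamma (2 + 2*γ) * δ ^ (-(2 + 2*γ)) with hT1def
  set T2 := Real.Gamma (2 + γ + κ) * δ ^ (-(2 + γ + κ)) with hT2def
  set T3 := Real.Gamma (2 + 2*κ) * δ ^ (-(2 + 2*κ)) with hT3def
  have hT1 : 0 ≤ T1 :=
    mul_nonneg (Real.Gamma_pos_of_pos (by linarith)).le (Real.rpow_nonneg hδ0.le _)
  have hT2 : 0 ≤ T2 :=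
    mul_nonneg (Real.Gamma_pos_of_pos (by linarith)).le (Real.rpow_nonneg hδ0.le _)
  have hT3 : 0 ≤ T3 :=
    mul_nonneg (Real.Gamma_pos_of_pos (by linarith)).le (Real.rpow_nonneg hδ0.le _)
  have hS1 : Iγ + Iκ ≤ K * (T1 + 2*T2 + T3) * (Iγ + Iκ) := by
    nlinarith [hBγ, hBκ, mul_nonneg (mul_nonneg hK.le hT2) hIγ0,
      mul_nonneg (mul_nonneg hK.le hT3) hIγ0, mul_nonneg (mul_nonneg hK.le hT1) hIκ0,
      mul_nonneg (mul_nonneg hK.le hT2) hIκ0]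
  have hS0 : Iγ + Iκ ≤ 0 := by
    by_contra hpos
    push_neg at hpos
    nlinarith [hS1, mul_pos hpos (sub_pos.mpr hFδ)]
  have hIγz : Iγ = 0 := le_antisymm (by linarith) hIγ0
  -- Step D: conclude
  have hnn : 0 ≤ᵐ[volume.restrict (Set.Ioi (0:ℝ))]
      fun y => y ^ γ * Real.exp (-δ * y) * ‖Δ y‖ := by
    filter_upwards [self_mem_ae_restrict measurableSet_Ioi] with y hy
    exact mul_nonneg (mul_nonneg (Real.rpow_nonneg (le_of_lt hy) _) (Real.exp_pos _).le)
      (norm_nonneg _)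
  have hae2 : (fun y => y ^ γ * Real.exp (-δ * y) * ‖Δ y‖)
      =ᵐ[volume.restrict (Set.Ioi (0:ℝ))] 0 :=
    (integral_eq_zero_iff_of_nonneg_ae hnn hIγ).mp hIγz
  have hΔae : ∀ᵐ y ∂(volume.restrict (Set.Ioi (0:ℝ))), ‖Δ y‖ = 0 := by
    filter_upwards [hae2, self_mem_ae_restrict measurableSet_Ioi] with y h1 h2
    have hy : (0:ℝ) < y := h2
    have hp : 0 < y ^ γ * Real.exp (-δ * y) := by positivity
    have h1' : y ^ γ * Real.exp (-δ * y) * ‖Δ y‖ = 0 := h1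
    rcases mul_eq_zero.mp h1' with h | h
    · exact absurd h hp.ne'
    · exact h
  intro t ht
  have hint0 : (∫ y in Set.Ioi (0:ℝ),
      ‖g (t * y)‖ * Real.exp (-δ * y) * ‖Δ y‖) = 0 := by
    apply integral_eq_zero_of_ae
    filter_upwards [hΔae] with y h
    simp [h]
  have hfin := hbound t ht
  rw [hint0, mul_zero] at hfin
  exact norm_eq_zero.mp (le_antisymm hfin (norm_nonneg _))
end

section
/- Let α ∈ (0,2) and β ∈ (α/2, 1]. Then there exists a constant c = c(α, β) > 0 such that for all nonzero x, y ∈ ℂ with Im x ≤ 0 and Im y ≤ 0, |x^{α/2} − y^{α/2}| ≤ c·|x − y|^β·(min(|x|, |y|))^{α/2 − β}. -/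
open Complex Filter Set Topology

private lemma contW_cpow (γ : ℝ) {a : ℂ} (ha : a ≠ 0) :
    ContinuousWithinAt (fun z : ℂ => z ^ (γ : ℂ)) {z : ℂ | 0 ≤ z.im} a := by
  by_cases h : a ∈ Complex.slitPlane
  · exact (continuousAt_cpow_const h).continuousWithinAt
  · rw [Complex.mem_slitPlane_iff] at h
    push_neg at h
    obtain ⟨hre, him⟩ := h
    have hre' : a.re < 0 := by
      rcases hre.lt_or_eq with h0 | h0
      · exact h0
      · exact absurd (Complex.ext h0 him) ha
    have hlog := Complex.continuousWithinAt_log_of_re_neg_of_im_zero hre' him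
    have hexp : ContinuousWithinAt (fun z : ℂ => Complex.exp (Complex.log z * (γ : ℂ)))
        {z : ℂ | 0 ≤ z.im} a :=
      Complex.continuous_exp.continuousAt.comp_continuousWithinAt
        (hlog.mul continuousWithinAt_const)
    apply hexp.congr_of_eventuallyEq
    · filter_upwards [eventually_ne_nhdsWithin ha] with z hz
      exact Complex.cpow_def_of_ne_zero hz _
    · exact Complex.cpow_def_of_ne_zero ha _

private lemma strict_bound (γ β : ℝ) (hγ0 : 0 < γ) (hγ1 : γ < 1) (hγβ : γ < β) (hβ1 : β ≤ 1)
    (a b : ℂ) (ha : 0 < a.im) (hb : 0 < b.im) :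
    ‖(a ^ (γ : ℂ) - b ^ (γ : ℂ))‖ ≤
      ((2 * 3 ^ γ + 1) * 2 ^ (β - γ)) * ‖(a - b)‖ ^ β
        * min (‖a‖) (‖b‖) ^ (γ - β) := by
  have ha0 : a ≠ 0 := by intro h; rw [h] at ha; simp at ha
  have hb0 : b ≠ 0 := by intro h; rw [h] at hb; simp at hb
  set d : ℝ := ‖(a - b)‖ with hd_def
  set m : ℝ := min (‖a‖) (‖b‖) with hm_def
  have hm : 0 < m := lt_min (norm_pos_iff.mpr ha0) (norm_pos_iff.mpr hb0)
  rcases eq_or_ne a b with rfl | hab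
  · simp only [sub_self, map_zero, norm_zero]
    positivity
  have hd : 0 < d := norm_pos_iff.mpr (sub_ne_zero.mpr hab)
  have h2 : (0:ℝ) < 2 ^ (β - γ) := Real.rpow_pos_of_pos (by norm_num) _
  have h3 : (0:ℝ) < 3 ^ γ := Real.rpow_pos_of_pos (by norm_num) _
  have hm2 : (m / 2) ^ (γ - β) = m ^ (γ - β) * 2 ^ (β - γ) := by
    rw [Real.div_rpow hm.le (by norm_num), div_eq_mul_inv, ← Real.rpow_neg (by norm_num), neg_sub]
  by_cases hcase : m ≤ 2 * d
  · -- far case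
    have htri : ∀ u v : ℂ, ‖(u - v)‖ ≤ ‖u‖ + ‖v‖ := by
      intro u v
      simpa using norm_sub_le_norm_sub_add_norm_sub u 0 v
    have hmaxa : ‖a‖ ≤ 3 * d := by
      have h1 : ‖a‖ ≤ d + ‖b‖ := by
        simpa [add_comm] using norm_sub_le_norm_sub_add_norm_sub a b 0
      rcases le_total (‖a‖) (‖b‖) with h | h
      · have : m = ‖a‖ := min_eq_left h
        linarith
      · have : m = ‖b‖ := min_eq_right h
        linarith
    have hmaxb : ‖b‖ ≤ 3 * d := by
      have h1 : ‖b‖ ≤ d + ‖a‖ := by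
        have := norm_sub_le_norm_sub_add_norm_sub b a 0
        simp only [sub_zero] at this
        calc ‖b‖ ≤ ‖(b - a)‖ + ‖a‖ := this
          _ = d + ‖a‖ := by rw [hd_def, ← norm_neg (a - b)]; ring_nf
      rcases le_total (‖a‖) (‖b‖) with h | h
      · have : m = ‖a‖ := min_eq_left h
        linarith
      · have : m = ‖b‖ := min_eq_right h
        linarith
    have step1 : ‖(a ^ (γ : ℂ) - b ^ (γ : ℂ))‖ ≤ 2 * (3 * d) ^ γ := by
      calc ‖(a ^ (γ : ℂ) - b ^ (γ : ℂ))‖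
          ≤ ‖(a ^ (γ : ℂ))‖ + ‖(b ^ (γ : ℂ))‖ := htri _ _
        _ = ‖a‖ ^ γ + ‖b‖ ^ γ := by
            rw [Complex.norm_cpow_real, Complex.norm_cpow_real]
        _ ≤ (3 * d) ^ γ + (3 * d) ^ γ :=
            add_le_add (Real.rpow_le_rpow (norm_nonneg a) hmaxa hγ0.le)
              (Real.rpow_le_rpow (norm_nonneg b) hmaxb hγ0.le)
        _ = 2 * (3 * d) ^ γ := by ring
    have step2 : (3 * d) ^ γ = 3 ^ γ * (d ^ β * d ^ (γ - β)) := by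
      rw [Real.mul_rpow (by norm_num) hd.le, ← Real.rpow_add hd]
      ring_nf
    have step3 : d ^ (γ - β) ≤ m ^ (γ - β) * 2 ^ (β - γ) := by
      rw [← hm2]
      exact Real.rpow_le_rpow_of_nonpos (by linarith) (by linarith) (by linarith)
    calc ‖(a ^ (γ : ℂ) - b ^ (γ : ℂ))‖
        ≤ 2 * (3 * d) ^ γ := step1
      _ = 2 * 3 ^ γ * d ^ β * d ^ (γ - β) := by rw [step2]; ring
      _ ≤ 2 * 3 ^ γ * d ^ β * (m ^ (γ - β) * 2 ^ (β - γ)) := by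
          gcongr
      _ ≤ (2 * 3 ^ γ + 1) * 2 ^ (β - γ) * d ^ β * m ^ (γ - β) := by
          have hdb : (0:ℝ) ≤ d ^ β := by positivity
          have hmgb : (0:ℝ) ≤ m ^ (γ - β) := by positivity
          nlinarith [mul_nonneg (mul_nonneg hdb hmgb) h2.le]
  · -- near case: 2 * d < m
    push_neg at hcase
    have hdm : d < m / 2 := by linarith
    have hseg : ∀ z ∈ segment ℝ a b, m / 2 ≤ ‖z‖ ∧ 0 < z.im := by
      intro z hz
      rw [segment_eq_image'] at hz
      obtain ⟨t, ⟨ht0, ht1⟩, rfl⟩ := hz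
      constructor
      · have h1 : ‖(t • (b - a))‖ ≤ d := by
          rw [norm_smul]
          have : ‖(b - a)‖ = d := by
            rw [hd_def, ← norm_neg (a - b)]; ring_nf
          rw [this, Real.norm_eq_abs, _root_.abs_of_nonneg ht0]
          nlinarith
        have h2' : ‖a‖ ≤ ‖(a + t • (b - a))‖ + d := by
          have h3' := norm_sub_le_norm_sub_add_norm_sub (a + t • (b - a)) 0 (t • (b - a))
          have h4 : a + t • (b - a) - t • (b - a) = a := by ring
          rw [h4, sub_zero, zero_sub, norm_neg] at h3'
          linarith
        have hma : m ≤ ‖a‖ := min_le_left _ _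
        linarith
      · have him : (a + t • (b - a)).im = (1 - t) * a.im + t * b.im := by
          simp [Complex.add_im, Complex.smul_im, Complex.sub_im]
          ring
        rw [him]
        nlinarith [mul_nonneg ht0 hb.le, mul_nonneg (by linarith : (0:ℝ) ≤ 1 - t) ha.le]
    have hderiv : ∀ z ∈ segment ℝ a b,
        HasDerivWithinAt (fun w : ℂ => w ^ (γ : ℂ)) ((γ : ℂ) * z ^ ((γ : ℂ) - 1) * 1)
          (segment ℝ a b) z := by
      intro z hz
      exact ((hasDerivAt_id z).cpow_const
        (Complex.mem_slitPlane_iff.mpr (Or.inr (hseg z hz).2.ne'))).hasDerivWithinAt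
    have hbound : ∀ z ∈ segment ℝ a b,
        ‖(γ : ℂ) * z ^ ((γ : ℂ) - 1) * 1‖ ≤ γ * (m / 2) ^ (γ - 1) := by
      intro z hz
      have hcast : ((γ : ℂ) - 1) = ((γ - 1 : ℝ) : ℂ) := by push_cast; ring
      rw [mul_one, hcast, norm_mul,
        Complex.norm_real, Real.norm_eq_abs, Complex.norm_cpow_real, _root_.abs_of_nonneg hγ0.le]
      have hzb : ‖z‖ ^ (γ - 1) ≤ (m / 2) ^ (γ - 1) :=
        Real.rpow_le_rpow_of_nonpos (by linarith) (hseg z hz).1 (by linarith)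
      exact mul_le_mul_of_nonneg_left hzb hγ0.le
    have hmvt := (convex_segment a b).norm_image_sub_le_of_norm_hasDerivWithin_le
      hderiv hbound (right_mem_segment ℝ a b) (left_mem_segment ℝ a b)
    have hd1 : d ^ (1 - β) ≤ (m / 2) ^ (1 - β) :=
      Real.rpow_le_rpow hd.le hdm.le (by linarith)
    have hsplit : d = d ^ β * d ^ (1 - β) := by
      rw [← Real.rpow_add hd]
      norm_num
    have hcomb : (m / 2) ^ (γ - 1) * (m / 2) ^ (1 - β) = m ^ (γ - β) * 2 ^ (β - γ) := by
      rw [← Real.rpow_add (by linarith), ← hm2]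
      ring_nf
    calc ‖(a ^ (γ : ℂ) - b ^ (γ : ℂ))‖ ≤ γ * (m / 2) ^ (γ - 1) * d := hmvt
      _ = γ * (m / 2) ^ (γ - 1) * (d ^ β * d ^ (1 - β)) := by rw [← hsplit]
      _ ≤ γ * (m / 2) ^ (γ - 1) * (d ^ β * (m / 2) ^ (1 - β)) := by
          gcongr
      _ = γ * (m ^ (γ - β) * 2 ^ (β - γ)) * d ^ β := by rw [← hcomb]; ring
      _ ≤ (2 * 3 ^ γ + 1) * 2 ^ (β - γ) * d ^ β * m ^ (γ - β) := by
          have : γ ≤ 2 * 3 ^ γ + 1 := by nlinarith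
          have hdb : (0:ℝ) ≤ d ^ β := by positivity
          have hmgb : (0:ℝ) ≤ m ^ (γ - β) := by positivity
          nlinarith [mul_nonneg (mul_nonneg hdb hmgb) h2.le]

private lemma upper_bound (γ β : ℝ) (hγ0 : 0 < γ) (hγ1 : γ < 1) (hγβ : γ < β) (hβ1 : β ≤ 1)
    (a b : ℂ) (ha0 : a ≠ 0) (hb0 : b ≠ 0) (ha : 0 ≤ a.im) (hb : 0 ≤ b.im) :
    ‖(a ^ (γ : ℂ) - b ^ (γ : ℂ))‖ ≤
      ((2 * 3 ^ γ + 1) * 2 ^ (β - γ)) * ‖(a - b)‖ ^ β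
        * min (‖a‖) (‖b‖) ^ (γ - β) := by
  have hm : 0 < min (‖a‖) (‖b‖) :=
    lt_min (norm_pos_iff.mpr ha0) (norm_pos_iff.mpr hb0)
  have hpath : ∀ z : ℂ, z ≠ 0 → 0 ≤ z.im →
      Tendsto (fun ε : ℝ => z + ε * Complex.I) (𝓝[>] 0) (𝓝[{w : ℂ | 0 ≤ w.im}] z) := by
    intro z hz0 hzim
    rw [tendsto_nhdsWithin_iff]
    constructor
    · have hc : Continuous (fun ε : ℝ => z + (ε : ℂ) * Complex.I) := by continuity
      have h' : Tendsto (fun ε : ℝ => z + (ε : ℂ) * Complex.I) (𝓝[>] (0:ℝ))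
          (𝓝 (z + ((0:ℝ) : ℂ) * Complex.I)) := (hc.tendsto 0).mono_left nhdsWithin_le_nhds
      simpa using h'
    · filter_upwards [self_mem_nhdsWithin] with ε (hε : (0:ℝ) < ε)
      simp only [mem_setOf_eq, Complex.add_im, Complex.mul_im, Complex.ofReal_re,
        Complex.I_im, Complex.ofReal_im, Complex.I_re]
      nlinarith
  have hLa : Tendsto (fun ε : ℝ => (a + ε * Complex.I) ^ (γ : ℂ)) (𝓝[>] 0)
      (𝓝 (a ^ (γ : ℂ))) := (contW_cpow γ ha0).tendsto.comp (hpath a ha0 ha)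
  have hLb : Tendsto (fun ε : ℝ => (b + ε * Complex.I) ^ (γ : ℂ)) (𝓝[>] 0)
      (𝓝 (b ^ (γ : ℂ))) := (contW_cpow γ hb0).tendsto.comp (hpath b hb0 hb)
  have hL : Tendsto (fun ε : ℝ =>
      ‖((a + ε * Complex.I) ^ (γ : ℂ) - (b + ε * Complex.I) ^ (γ : ℂ))‖) (𝓝[>] 0)
      (𝓝 (‖(a ^ (γ : ℂ) - b ^ (γ : ℂ))‖)) :=
    (continuous_norm.tendsto _).comp (hLa.sub hLb)
  have hMin : Tendsto (fun ε : ℝ =>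
      min (‖(a + ε * Complex.I)‖) (‖(b + ε * Complex.I)‖)) (𝓝[>] 0)
      (𝓝 (min (‖a‖) (‖b‖))) := by
    have hc : Continuous (fun ε : ℝ =>
        min (‖(a + (ε:ℂ) * Complex.I)‖) (‖(b + (ε:ℂ) * Complex.I)‖)) := by
      continuity
    have h' : Tendsto (fun ε : ℝ =>
        min (‖(a + (ε:ℂ) * Complex.I)‖) (‖(b + (ε:ℂ) * Complex.I)‖))
        (𝓝[>] (0:ℝ))
        (𝓝 (min (‖(a + ((0:ℝ):ℂ) * Complex.I)‖) (‖(b + ((0:ℝ):ℂ) * Complex.I)‖))) :=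
      (hc.tendsto 0).mono_left nhdsWithin_le_nhds
    simpa using h'
  have hR : Tendsto (fun ε : ℝ =>
      ((2 * 3 ^ γ + 1) * 2 ^ (β - γ)) * ‖(a - b)‖ ^ β
        * (min (‖(a + ε * Complex.I)‖) (‖(b + ε * Complex.I)‖)) ^ (γ - β))
      (𝓝[>] 0)
      (𝓝 (((2 * 3 ^ γ + 1) * 2 ^ (β - γ)) * ‖(a - b)‖ ^ β
        * min (‖a‖) (‖b‖) ^ (γ - β))) :=
    tendsto_const_nhds.mul
      (((Real.continuousAt_rpow_const _ _ (Or.inl hm.ne')).tendsto).comp hMin)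
  refine le_of_tendsto_of_tendsto hL hR ?_
  filter_upwards [self_mem_nhdsWithin] with ε (hε : (0:ℝ) < ε)
  have hima : 0 < (a + ε * Complex.I).im := by
    simp only [Complex.add_im, Complex.mul_im, Complex.ofReal_re, Complex.I_im,
      Complex.ofReal_im, Complex.I_re]
    nlinarith
  have himb : 0 < (b + ε * Complex.I).im := by
    simp only [Complex.add_im, Complex.mul_im, Complex.ofReal_re, Complex.I_im,
      Complex.ofReal_im, Complex.I_re]
    nlinarith
  have h1 := strict_bound γ β hγ0 hγ1 hγβ hβ1 (a + ε * Complex.I) (b + ε * Complex.I) hima himb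
  have h2 : (a + ε * Complex.I) - (b + ε * Complex.I) = a - b := by ring
  rw [h2] at h1
  exact h1



/-- Hölder-type estimate for the power function `z ↦ z^{α/2}` on the closed lower half-plane
(branch continuous from the lower half-plane, i.e. `x ↦ conj((conj x)^{α/2})`):
for `α ∈ (0,2)` and `β ∈ (α/2, 1]` there is `c > 0` such that for all nonzero `x, y` with
`Im x ≤ 0`, `Im y ≤ 0`,
`|x^{α/2} − y^{α/2}| ≤ c |x − y|^β (min(|x|,|y|))^{α/2−β}`. -/
theorem cpow_holder_lower_half_plane
    (α β : ℝ) (hα : α ∈ Set.Ioo (0 : ℝ) 2) (hβ : β ∈ Set.Ioc (α / 2) 1) :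
    ∃ c : ℝ, 0 < c ∧ ∀ x y : ℂ, x ≠ 0 → y ≠ 0 → x.im ≤ 0 → y.im ≤ 0 →
      ‖((starRingEnd ℂ) (((starRingEnd ℂ) x) ^ ((α / 2 : ℝ) : ℂ))
            - (starRingEnd ℂ) (((starRingEnd ℂ) y) ^ ((α / 2 : ℝ) : ℂ)))‖
        ≤ c * ‖x - y‖ ^ β
            * min ‖x‖ ‖y‖ ^ (α / 2 - β) := by
  obtain ⟨hα0, hα2⟩ := hα
  obtain ⟨hβ1, hβ2⟩ := hβ
  refine ⟨(2 * 3 ^ (α / 2) + 1) * 2 ^ (β - α / 2), by positivity, ?_⟩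
  intro x y hx hy hxim hyim
  have hcx : (starRingEnd ℂ) x ≠ 0 := by simpa using hx
  have hcy : (starRingEnd ℂ) y ≠ 0 := by simpa using hy
  have hix : 0 ≤ ((starRingEnd ℂ) x).im := by simp [Complex.conj_im]; linarith
  have hiy : 0 ≤ ((starRingEnd ℂ) y).im := by simp [Complex.conj_im]; linarith
  have h := upper_bound (α / 2) β (by linarith) (by linarith) hβ1 hβ2
    ((starRingEnd ℂ) x) ((starRingEnd ℂ) y) hcx hcy hix hiy
  calc ‖((starRingEnd ℂ) (((starRingEnd ℂ) x) ^ ((α / 2 : ℝ) : ℂ))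
            - (starRingEnd ℂ) (((starRingEnd ℂ) y) ^ ((α / 2 : ℝ) : ℂ)))‖
      = ‖(((starRingEnd ℂ) x) ^ ((α / 2 : ℝ) : ℂ)
          - ((starRingEnd ℂ) y) ^ ((α / 2 : ℝ) : ℂ))‖ := by
        rw [← map_sub, Complex.norm_conj]
    _ ≤ ((2 * 3 ^ (α / 2) + 1) * 2 ^ (β - α / 2))
          * ‖((starRingEnd ℂ) x - (starRingEnd ℂ) y)‖ ^ β
          * min (‖((starRingEnd ℂ) x)‖) (‖((starRingEnd ℂ) y)‖)
              ^ (α / 2 - β) := h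
    _ = (2 * 3 ^ (α / 2) + 1) * 2 ^ (β - α / 2) * ‖(x - y)‖ ^ β
          * min (‖x‖) (‖y‖) ^ (α / 2 - β) := by
        rw [← map_sub, Complex.norm_conj, Complex.norm_conj, Complex.norm_conj]
end
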